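/- arXiv:2209.05678 — 2 statements merged into one kernel-verified Lean document; each statement's English description precedes it below -/
import Mathlib

section
/- There exists a universal constant ε₀ > 0 such that the following holds for every graph G. Let (A, X) be the (P3) input construction for G, with A ∈ ℝ^{3n'×3n'}. If there exist symmetric matrices L, H ∈ ℝ^{3n'×3n'} such that L fits X, ‖H‖_F ≤ ε₀, A + L + H is positive semidefinite, and rank(A + L + H) ≤ 3, then G is 3-colorable. -/
open Matrix

noncomputable section

/-- Unordered pairs of distinct vertices of `Fin N`, represented by ordered pairs
`(i, j)` with `i < j`. -/
abbrev Pairs (N : ℕ) := {p : Fin N × Fin N // p.1 < p.2}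

/-- Vertices of the Peeters supergraph: the original vertices together with, for each
unordered pair `{i,j}` of distinct vertices, four new vertices `a, b, c, d`
(encoded as `(q, 0), (q, 1), (q, 2), (q, 3)`). -/
abbrev PV (N : ℕ) := Fin N ⊕ (Pairs N × Fin 4)

/-- The generating relation for the edges of the Peeters supergraph: the original edges
together with, for each unordered pair `q = {i,j}`, the nine edges
`{i,a}, {i,b}, {a,b}, {j,c}, {j,d}, {c,d}, {a,j}, {i,d}, {b,c}`. -/
def peetersRel (N : ℕ) (G : SimpleGraph (Fin N)) : PV N → PV N → Prop := fun x y =>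
  (∃ i j : Fin N, G.Adj i j ∧ x = Sum.inl i ∧ y = Sum.inl j) ∨
  (∃ q : Pairs N,
    (x = Sum.inl q.val.1 ∧ y = Sum.inr (q, 0)) ∨
    (x = Sum.inl q.val.1 ∧ y = Sum.inr (q, 1)) ∨
    (x = Sum.inr (q, 0) ∧ y = Sum.inr (q, 1)) ∨
    (x = Sum.inl q.val.2 ∧ y = Sum.inr (q, 2)) ∨
    (x = Sum.inl q.val.2 ∧ y = Sum.inr (q, 3)) ∨
    (x = Sum.inr (q, 2) ∧ y = Sum.inr (q, 3)) ∨
    (x = Sum.inr (q, 0) ∧ y = Sum.inl q.val.2) ∨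
    (x = Sum.inl q.val.1 ∧ y = Sum.inr (q, 3)) ∨
    (x = Sum.inr (q, 1) ∧ y = Sum.inr (q, 2)))

/-- The Peeters supergraph `G'` of `G`. -/
def peetersGraph (N : ℕ) (G : SimpleGraph (Fin N)) : SimpleGraph (PV N) :=
  SimpleGraph.fromRel (peetersRel N G)

/-- Row/column indices of the `(P3)` input construction: pairs `(v, μ)` with
`v ∈ V(G')` and `μ ∈ {1,2,3}`. -/
abbrev Idx (N : ℕ) := PV N × Fin 3

/-- The matrix `A` of the `(P3)` input construction:
`A((v,μ),(w,ν)) = 1` if `v = w` and `μ ≠ ν`, and `0` otherwise. -/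
def AP3 (N : ℕ) : Matrix (Idx N) (Idx N) ℝ := fun p q =>
  if p.1 = q.1 ∧ p.2 ≠ q.2 then 1 else 0

/-- `L` fits the edge set `X` of the `(P3)` input construction, i.e. `L` vanishes on
all pairs `{(v,μ),(w,ν)}` with `{v,w} ∈ E(G')` and on all pairs `{(v,μ),(v,ν)}` with
`μ ≠ ν`. -/
def FitsX (N : ℕ) (G : SimpleGraph (Fin N)) (L : Matrix (Idx N) (Idx N) ℝ) : Prop :=
  (∀ p q : Idx N, (peetersGraph N G).Adj p.1 q.1 → L p q = 0) ∧
  (∀ (v : PV N) (μ ν : Fin 3), μ ≠ ν → L (v, μ) (v, ν) = 0)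


/-- The Frobenius norm of a real matrix. -/
def frob {m n : Type*} [Fintype m] [Fintype n] (A : Matrix m n ℝ) : ℝ :=
  Real.sqrt (∑ i, ∑ j, (A i j) ^ 2)



lemma dot_cs {ι : Type*} [Fintype ι] (u v : ι → ℝ) :
    (u ⬝ᵥ v) ^ 2 ≤ (u ⬝ᵥ u) * (v ⬝ᵥ v) := by
  simpa [dotProduct, pow_two] using Finset.sum_mul_sq_le_sq_mul_sq Finset.univ u v

lemma almost_orth_li {ι κ : Type*} [Fintype ι] [Fintype κ] [DecidableEq κ]
    (v : κ → ι → ℝ) (θ : ℝ)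
    (hunit : ∀ k, v k ⬝ᵥ v k = 1)
    (horth : ∀ k l, k ≠ l → |v k ⬝ᵥ v l| ≤ θ)
    (hθ : θ * ((Fintype.card κ : ℝ) - 1) < 1) :
    LinearIndependent ℝ v := by
  rw [Fintype.linearIndependent_iff]
  intro g hg
  by_contra hne
  push_neg at hne
  obtain ⟨j0, hj0⟩ := hne
  obtain ⟨k, -, hk⟩ := Finset.exists_max_image Finset.univ (fun i => |g i|) ⟨j0, Finset.mem_univ _⟩
  have hgk : 0 < |g k| := lt_of_lt_of_le (abs_pos.mpr hj0) (hk j0 (Finset.mem_univ _))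
  have h0 : ∑ i, g i * (v i ⬝ᵥ v k) = 0 := by
    calc ∑ i, g i * (v i ⬝ᵥ v k) = (∑ i, g i • v i) ⬝ᵥ v k := by
          simp only [dotProduct, Finset.mul_sum, Finset.sum_apply, Pi.smul_apply,
            smul_eq_mul, mul_assoc]
          rw [Finset.sum_comm]
          exact Finset.sum_congr rfl fun j _ => by rw [Finset.sum_mul]; exact Finset.sum_congr rfl fun i _ => by ring
    _ = 0 := by rw [hg]; simp [dotProduct]
  have hsplit := Finset.add_sum_erase Finset.univ (fun i => g i * (v i ⬝ᵥ v k)) (Finset.mem_univ k)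
  simp only [hunit k, mul_one] at hsplit
  have hbb : ∀ i ∈ Finset.univ.erase k, |g i * (v i ⬝ᵥ v k)| ≤ |g k| * θ := by
    intro i hi
    rw [abs_mul]
    exact mul_le_mul (hk i (Finset.mem_univ _))
        (horth i k (Finset.mem_erase.mp hi).1) (abs_nonneg _) (abs_nonneg _)
  have hcard : ((Finset.univ.erase k).card : ℝ) = (Fintype.card κ : ℝ) - 1 := by
    rw [Finset.card_erase_of_mem (Finset.mem_univ k), Finset.card_univ]
    have : 1 ≤ Fintype.card κ := Fintype.card_pos_iff.mpr ⟨k⟩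
    push_cast [Nat.cast_sub this]
    ring
  have habs : |g k| ≤ ((Fintype.card κ : ℝ) - 1) * (|g k| * θ) := by
    have h1 : g k = -∑ i ∈ Finset.univ.erase k, g i * (v i ⬝ᵥ v k) := by
      rw [h0] at hsplit; linarith
    calc |g k| = |∑ i ∈ Finset.univ.erase k, g i * (v i ⬝ᵥ v k)| := by rw [h1, abs_neg]
    _ ≤ ∑ i ∈ Finset.univ.erase k, |g i * (v i ⬝ᵥ v k)| := Finset.abs_sum_le_sum_abs _ _
    _ ≤ (Finset.univ.erase k).card • (|g k| * θ) := Finset.sum_le_card_nsmul _ _ _ hbb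
    _ = ((Fintype.card κ : ℝ) - 1) * (|g k| * θ) := by rw [nsmul_eq_mul, hcard]
  nlinarith [mul_pos hgk (by linarith : (0:ℝ) < 1 - θ * ((Fintype.card κ : ℝ) - 1))]


lemma bil (u v e η : ℝ) (h1 : -η ≤ e) (h2 : e ≤ η) :
    2*(u*v*e) ≤ η*(u^2+v^2) ∧ -(η*(u^2+v^2)) ≤ 2*(u*v*e) := by
  constructor <;>
  nlinarith [mul_nonneg (by linarith : (0:ℝ) ≤ η - e) (sq_nonneg (u+v)),
    mul_nonneg (by linarith : (0:ℝ) ≤ η + e) (sq_nonneg (u-v)),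
    mul_nonneg (by linarith : (0:ℝ) ≤ η - e) (sq_nonneg (u-v)),
    mul_nonneg (by linarith : (0:ℝ) ≤ η + e) (sq_nonneg (u+v))]

lemma Sbound (η e12 e13 e23 a1 a2 a3 : ℝ) (hη : η ≤ 1/1000)
    (h12 : |e12| ≤ η) (h13 : |e13| ≤ η) (h23 : |e23| ≤ η)
    (E : a1^2 + a2^2 + a3^2 + 2*(a1*a2*e12 + a1*a3*e13 + a2*a3*e23) = 1) :
    99/100 ≤ a1^2 + a2^2 + a3^2 ∧ a1^2 + a2^2 + a3^2 ≤ 101/100 := by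
  obtain ⟨h12a, h12b⟩ := abs_le.mp h12
  obtain ⟨h13a, h13b⟩ := abs_le.mp h13
  obtain ⟨h23a, h23b⟩ := abs_le.mp h23
  obtain ⟨b1, b1'⟩ := bil a1 a2 e12 η h12a h12b
  obtain ⟨b2, b2'⟩ := bil a1 a3 e13 η h13a h13b
  obtain ⟨b3, b3'⟩ := bil a2 a3 e23 η h23a h23b
  have hS0 : 0 ≤ a1^2 + a2^2 + a3^2 := by positivity
  have key : (0:ℝ) ≤ (1/1000 - η) * (a1^2 + a2^2 + a3^2) :=
    mul_nonneg (by linarith) hS0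
  constructor <;> nlinarith [key]

/-- small coefficient from a near-orthogonality relation -/
lemma smallcoef (η w p q x y s : ℝ) (hs : s = w - p*x - q*y) (hw : w^2 ≤ η^2)
    (hp : p^2 ≤ 101/100) (hq : q^2 ≤ 101/100) (hx : x^2 ≤ η^2) (hy : y^2 ≤ η^2) :
    s^2 ≤ 10*η^2 := by
  have h1 : p^2*x^2 ≤ (101/100)*η^2 :=
    le_trans (mul_le_mul_of_nonneg_left hx (sq_nonneg p)) (by nlinarith [sq_nonneg η])
  have h2 : q^2*y^2 ≤ (101/100)*η^2 :=
    le_trans (mul_le_mul_of_nonneg_left hy (sq_nonneg q)) (by nlinarith [sq_nonneg η])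
  subst hs
  nlinarith [sq_nonneg (w + p*x), sq_nonneg (w + q*y), sq_nonneg (p*x - q*y)]

lemma Pbound (a1 a2 a3 c1 c2 c3 : ℝ)
    (hSa : a1^2+a2^2+a3^2 ≤ 101/100) (hSc : c1^2+c2^2+c3^2 ≤ 101/100) :
    (a1*c2 + a2*c1)^2 + (a1*c3 + a3*c1)^2 + (a2*c3 + a3*c2)^2 ≤ 21/10 := by
  have hSS : (a1^2+a2^2+a3^2)*(c1^2+c2^2+c3^2) ≤ (101/100)*(101/100) :=
    mul_le_mul hSa hSc (by positivity) (by norm_num)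
  nlinarith [sq_nonneg (a1*c2 - a2*c1), sq_nonneg (a1*c3 - a3*c1), sq_nonneg (a2*c3 - a3*c2),
    mul_nonneg (sq_nonneg a1) (sq_nonneg c1), mul_nonneg (sq_nonneg a2) (sq_nonneg c2),
    mul_nonneg (sq_nonneg a3) (sq_nonneg c3)]

lemma Dbound (η e12 e13 e23 u v w D E : ℝ)
    (hx : e12^2 ≤ η^2) (hy : e13^2 ≤ η^2) (hz : e23^2 ≤ η^2)
    (hP : u^2 + v^2 + w^2 ≤ 21/10)
    (hE : E = u*e12 + v*e13 + w*e23)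
    (hQ : (D + E)^2 ≤ η^2) :
    D^2 ≤ 100*η^2 := by
  have h1 : u^2*e12^2 ≤ u^2*η^2 := mul_le_mul_of_nonneg_left hx (sq_nonneg u)
  have h2 : v^2*e13^2 ≤ v^2*η^2 := mul_le_mul_of_nonneg_left hy (sq_nonneg v)
  have h3 : w^2*e23^2 ≤ w^2*η^2 := mul_le_mul_of_nonneg_left hz (sq_nonneg w)
  have h4 : (u^2 + v^2 + w^2)*η^2 ≤ (21/10)*η^2 := mul_le_mul_of_nonneg_right hP (sq_nonneg η)
  have hE2 : E^2 ≤ 7*η^2 := by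
    subst hE
    nlinarith [sq_nonneg (u*e12 - v*e13), sq_nonneg (u*e12 - w*e23), sq_nonneg (v*e13 - w*e23)]
  nlinarith [sq_nonneg (D + 2*E)]

lemma sq_prod_le (p q M K : ℝ) (hp : p^2 ≤ M) (hq : q^2 ≤ K) : (p*q)^2 ≤ M*K := by
  have := mul_le_mul hp hq (sq_nonneg q) (le_trans (sq_nonneg p) hp)
  nlinarith [this]

lemma prod3 (η P Q R : ℝ) (hD : (P+Q+R)^2 ≤ 100*η^2) (hP : P^2 ≤ 11*η^2) (hQ : Q^2 ≤ 11*η^2) :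
    R^2 ≤ 400*η^2 := by
  nlinarith [sq_nonneg ((P+Q+R) + P), sq_nonneg ((P+Q+R) + Q), sq_nonneg (P - Q)]

lemma tsuba (η t a1 a2 a3 e12 e13 : ℝ) (ht : t = a1 + a2*e12 + a3*e13)
    (ha2 : a2^2 ≤ 10*η^2) (ha3 : a3^2 ≤ 101/100)
    (hee12 : e12^2 ≤ η^2) (hee13 : e13^2 ≤ η^2) (hη2 : η^2 ≤ 1/1000000) :
    (t - a1)^2 ≤ 3*η^2 := by
  have h1 : (a2*e12)^2 ≤ (10*η^2)*η^2 := sq_prod_le _ _ _ _ ha2 hee12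
  have h2 : (a3*e13)^2 ≤ (101/100)*η^2 := sq_prod_le _ _ _ _ ha3 hee13
  subst ht
  nlinarith [sq_nonneg (a2*e12 - a3*e13), sq_nonneg η, sq_nonneg (η*η)]

lemma caseA (η t a1 : ℝ) (h1 : 98/100 ≤ a1^2) (hd : (t-a1)^2 ≤ 3*η^2)
    (hη2 : η^2 ≤ 1/1000000) : 81/100 ≤ t^2 := by
  nlinarith [sq_nonneg (t + 10*(t - a1)), sq_nonneg (t - 10*(t - a1))]

lemma caseB (η t a1 : ℝ) (h1 : a1^2 ≤ 500*η^2) (hd : (t-a1)^2 ≤ 3*η^2)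
    (hη2 : η^2 ≤ 1/1000000) : t^2 ≤ 1/100 := by
  nlinarith [sq_nonneg (t - 2*a1)]

lemma sq3_bounds (p q r M : ℝ) (h : p^2+q^2+r^2 ≤ M) : p^2 ≤ M ∧ q^2 ≤ M ∧ r^2 ≤ M := by
  refine ⟨?_, ?_, ?_⟩ <;> nlinarith [sq_nonneg p, sq_nonneg q, sq_nonneg r]

lemma etasq (η : ℝ) (h0 : 0 ≤ η) (h : η ≤ 1/1000) : η^2 ≤ 1/1000000 := by nlinarith

lemma gadget_scalar (η e12 e13 e23 a1 a2 a3 b1 b2 b3 c1 c2 c3 t : ℝ)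
    (hη0 : 0 ≤ η) (hη : η ≤ 1/1000)
    (h12 : |e12| ≤ η) (h13 : |e13| ≤ η) (h23 : |e23| ≤ η)
    (Ey : a1^2 + a2^2 + a3^2 + 2*(a1*a2*e12 + a1*a3*e13 + a2*a3*e23) = 1)
    (Ec : b1^2 + b2^2 + b3^2 + 2*(b1*b2*e12 + b1*b3*e13 + b2*b3*e23) = 1)
    (Ed : c1^2 + c2^2 + c3^2 + 2*(c1*c2*e12 + c1*c3*e13 + c2*c3*e23) = 1)
    (Hay : |a1*e12 + a2 + a3*e23| ≤ η)
    (Hxd : |c1 + c2*e12 + c3*e13| ≤ η)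
    (Hbc : |b1*e13 + b2*e23 + b3| ≤ η)
    (Hyc : |a1*b1 + a2*b2 + a3*b3 + (a1*b2 + a2*b1)*e12 + (a1*b3 + a3*b1)*e13 + (a2*b3 + a3*b2)*e23| ≤ η)
    (Hyd : |a1*c1 + a2*c2 + a3*c3 + (a1*c2 + a2*c1)*e12 + (a1*c3 + a3*c1)*e13 + (a2*c3 + a3*c2)*e23| ≤ η)
    (Hcd : |b1*c1 + b2*c2 + b3*c3 + (b1*c2 + b2*c1)*e12 + (b1*c3 + b3*c1)*e13 + (b2*c3 + b3*c2)*e23| ≤ η)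
    (ht : t = a1 + a2*e12 + a3*e13) :
    t^2 ≤ 1/100 ∨ 81/100 ≤ t^2 := by
  have sdl : ∀ z : ℝ, |z| ≤ η → z^2 ≤ η^2 := fun z hz =>
    sq_le_sq' (abs_le.mp hz).1 (abs_le.mp hz).2
  have hee12 := sdl _ h12
  have hee13 := sdl _ h13
  have hee23 := sdl _ h23
  have hη2 : η^2 ≤ 1/1000000 := etasq η hη0 hη
  obtain ⟨hSy1, hSy2⟩ := Sbound η e12 e13 e23 a1 a2 a3 hη h12 h13 h23 Ey
  obtain ⟨hSc1, hSc2⟩ := Sbound η e12 e13 e23 b1 b2 b3 hη h12 h13 h23 Ec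
  obtain ⟨hSd1, hSd2⟩ := Sbound η e12 e13 e23 c1 c2 c3 hη h12 h13 h23 Ed
  obtain ⟨ha1, ha2', ha3⟩ := sq3_bounds a1 a2 a3 _ hSy2
  obtain ⟨hb1, hb2, hb3'⟩ := sq3_bounds b1 b2 b3 _ hSc2
  obtain ⟨hc1', hc2, hc3⟩ := sq3_bounds c1 c2 c3 _ hSd2
  -- small coefficients
  have ha2 : a2^2 ≤ 10*η^2 :=
    smallcoef η (a1*e12 + a2 + a3*e23) a1 a3 e12 e23 a2 (by ring) (sdl _ Hay)
      ha1 ha3 hee12 hee23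
  have hc1 : c1^2 ≤ 10*η^2 :=
    smallcoef η (c1 + c2*e12 + c3*e13) c2 c3 e12 e13 c1 (by ring) (sdl _ Hxd)
      hc2 hc3 hee12 hee13
  have hb3 : b3^2 ≤ 10*η^2 :=
    smallcoef η (b1*e13 + b2*e23 + b3) b1 b2 e13 e23 b3 (by ring) (sdl _ Hbc)
      hb1 hb2 hee13 hee23
  -- diagonal-product bounds
  have hDyc : (a1*b1 + a2*b2 + a3*b3)^2 ≤ 100*η^2 :=
    Dbound η e12 e13 e23 (a1*b2 + a2*b1) (a1*b3 + a3*b1) (a2*b3 + a3*b2) _ _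
      hee12 hee13 hee23 (Pbound a1 a2 a3 b1 b2 b3 hSy2 hSc2) rfl
      (by have h := sdl _ Hyc; convert h using 2; ring)
  have hDyd : (a1*c1 + a2*c2 + a3*c3)^2 ≤ 100*η^2 :=
    Dbound η e12 e13 e23 (a1*c2 + a2*c1) (a1*c3 + a3*c1) (a2*c3 + a3*c2) _ _
      hee12 hee13 hee23 (Pbound a1 a2 a3 c1 c2 c3 hSy2 hSd2) rfl
      (by have h := sdl _ Hyd; convert h using 2; ring)
  have hDcd : (b1*c1 + b2*c2 + b3*c3)^2 ≤ 100*η^2 :=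
    Dbound η e12 e13 e23 (b1*c2 + b2*c1) (b1*c3 + b3*c1) (b2*c3 + b3*c2) _ _
      hee12 hee13 hee23 (Pbound b1 b2 b3 c1 c2 c3 hSc2 hSd2) rfl
      (by have h := sdl _ Hcd; convert h using 2; ring)
  -- individual product bounds
  have ha3c3 : (a3*c3)^2 ≤ 400*η^2 := by
    refine prod3 η (a1*c1) (a2*c2) (a3*c3) hDyd ?_ ?_
    · have h := sq_prod_le a1 c1 (101/100) (10*η^2) ha1 hc1; linarith [sq_nonneg η]
    · have h := sq_prod_le a2 c2 (10*η^2) (101/100) ha2 hc2; linarith [sq_nonneg η]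
  have ha1b1 : (a1*b1)^2 ≤ 400*η^2 := by
    have h' : (a2*b2 + a3*b3 + a1*b1)^2 ≤ 100*η^2 := by convert hDyc using 2; ring
    refine prod3 η (a2*b2) (a3*b3) (a1*b1) h' ?_ ?_
    · have h := sq_prod_le a2 b2 (10*η^2) (101/100) ha2 hb2; linarith [sq_nonneg η]
    · have h := sq_prod_le a3 b3 (101/100) (10*η^2) ha3 hb3; linarith [sq_nonneg η]
  have hb2c2 : (b2*c2)^2 ≤ 400*η^2 := by
    have h' : (b1*c1 + b3*c3 + b2*c2)^2 ≤ 100*η^2 := by convert hDcd using 2; ring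
    refine prod3 η (b1*c1) (b3*c3) (b2*c2) h' ?_ ?_
    · have h := sq_prod_le b1 c1 (101/100) (10*η^2) hb1 hc1; linarith [sq_nonneg η]
    · have h := sq_prod_le b3 c3 (10*η^2) (101/100) hb3 hc3; linarith [sq_nonneg η]
  -- (t - a1)^2 small
  have htd : (t - a1)^2 ≤ 3*η^2 := tsuba η t a1 a2 a3 e12 e13 ht ha2 ha3 hee12 hee13 hη2
  rcases le_or_gt (49/100) (c3^2) with hcase | hcase
  · right
    have ha3s : a3^2 ≤ 900*η^2 := by
      have h1 : a3^2 * (49/100) ≤ 400*η^2 := by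
        calc a3^2 * (49/100) ≤ a3^2 * c3^2 := mul_le_mul_of_nonneg_left hcase (sq_nonneg a3)
        _ = (a3*c3)^2 := by ring
        _ ≤ 400*η^2 := ha3c3
      linarith [sq_nonneg η]
    have ha1big : 98/100 ≤ a1^2 := by linarith
    exact caseA η t a1 ha1big htd hη2
  · left
    have hc2big : 49/100 ≤ c2^2 := by linarith
    have hb2s : b2^2 ≤ 900*η^2 := by
      have h1 : b2^2 * (49/100) ≤ 400*η^2 := by
        calc b2^2 * (49/100) ≤ b2^2 * c2^2 := mul_le_mul_of_nonneg_left hc2big (sq_nonneg b2)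
        _ = (b2*c2)^2 := by ring
        _ ≤ 400*η^2 := hb2c2
      linarith [sq_nonneg η]
    have hb1big : 98/100 ≤ b1^2 := by linarith
    have ha1s : a1^2 ≤ 500*η^2 := by
      have h1 : a1^2 * (98/100) ≤ 400*η^2 := by
        calc a1^2 * (98/100) ≤ a1^2 * b1^2 := mul_le_mul_of_nonneg_left hb1big (sq_nonneg a1)
        _ = (a1*b1)^2 := by ring
        _ ≤ 400*η^2 := ha1b1
      linarith [sq_nonneg η]
    exact caseB η t a1 ha1s htd hη2

open Matrix in
lemma dot_single {ι : Type*} [Fintype ι] (z x a b u : ι → ℝ) (p1 p2 p3 : ℝ)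
    (hu : u = p1•x + p2•a + p3•b) :
    z ⬝ᵥ u = p1*(z ⬝ᵥ x) + p2*(z ⬝ᵥ a) + p3*(z ⬝ᵥ b) := by
  subst hu
  simp [dotProduct_add, dotProduct_smul, smul_eq_mul, mul_comm]

open Matrix in
lemma dot_comb3 {ι : Type*} [Fintype ι] (x a b u v : ι → ℝ) (p1 p2 p3 q1 q2 q3 : ℝ)
    (hu : u = p1•x + p2•a + p3•b) (hv : v = q1•x + q2•a + q3•b) :
    u ⬝ᵥ v = p1*q1*(x ⬝ᵥ x) + p2*q2*(a ⬝ᵥ a) + p3*q3*(b ⬝ᵥ b)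
      + (p1*q2 + p2*q1)*(x ⬝ᵥ a) + (p1*q3 + p3*q1)*(x ⬝ᵥ b) + (p2*q3 + p3*q2)*(a ⬝ᵥ b) := by
  subst hu
  simp only [add_dotProduct, smul_dotProduct, smul_eq_mul]
  rw [dot_single x x a b v q1 q2 q3 hv, dot_single a x a b v q1 q2 q3 hv,
    dot_single b x a b v q1 q2 q3 hv, dotProduct_comm a x, dotProduct_comm b x,
    dotProduct_comm b a]
  ring

open Matrix Module in
lemma gadget_vec {ι : Type*} [Fintype ι] (W : Submodule ℝ (ι → ℝ)) (hW : finrank ℝ W ≤ 3)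
    (x a b y c d : ι → ℝ) (η : ℝ) (hη0 : 0 ≤ η) (hη : η ≤ 1/1000)
    (hx : x ⬝ᵥ x = 1) (ha : a ⬝ᵥ a = 1) (hb : b ⬝ᵥ b = 1)
    (hy : y ⬝ᵥ y = 1) (hc : c ⬝ᵥ c = 1) (hd : d ⬝ᵥ d = 1)
    (mx : x ∈ W) (may : a ∈ W) (mb : b ∈ W) (my : y ∈ W) (mc : c ∈ W) (md : d ∈ W)
    (hxa : |x ⬝ᵥ a| ≤ η) (hxb : |x ⬝ᵥ b| ≤ η) (hab : |a ⬝ᵥ b| ≤ η)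
    (hyc : |y ⬝ᵥ c| ≤ η) (hyd : |y ⬝ᵥ d| ≤ η) (hcd : |c ⬝ᵥ d| ≤ η)
    (hay : |a ⬝ᵥ y| ≤ η) (hxd : |x ⬝ᵥ d| ≤ η) (hbc : |b ⬝ᵥ c| ≤ η) :
    (x ⬝ᵥ y)^2 ≤ 1/100 ∨ 81/100 ≤ (x ⬝ᵥ y)^2 := by
  have li : LinearIndependent ℝ ![x, a, b] := by
    apply almost_orth_li _ η
    · intro k; fin_cases k <;> assumption
    · intro k l hkl
      fin_cases k <;> fin_cases l <;>
        first
          | exact absurd rfl hkl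
          | assumption
          | (rw [dotProduct_comm]; assumption)
    · have h3 : ((Fintype.card (Fin 3) : ℝ) - 1) = 2 := by norm_num
      rw [h3]
      linarith
  set S3 : Submodule ℝ (ι → ℝ) := Submodule.span ℝ (Set.range ![x, a, b]) with hS3
  have hle : S3 ≤ W := by
    rw [hS3, Submodule.span_le]
    rintro z ⟨k, rfl⟩
    fin_cases k <;> assumption
  have hfr : finrank ℝ S3 = 3 := by
    rw [hS3, finrank_span_eq_card li, Fintype.card_fin]
  have heq : S3 = W := Submodule.eq_of_le_of_finrank_le hle (by rw [hfr]; exact hW)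
  have getc : ∀ z : ι → ℝ, z ∈ W → ∃ p : Fin 3 → ℝ, z = p 0 • x + p 1 • a + p 2 • b := by
    intro z hz
    rw [← heq, hS3, Submodule.mem_span_range_iff_exists_fun ℝ] at hz
    obtain ⟨p, hp⟩ := hz
    refine ⟨p, ?_⟩
    rw [← hp, Fin.sum_univ_three]
    simp [Matrix.cons_val_zero, Matrix.cons_val_one]
  obtain ⟨p, hp⟩ := getc y my
  obtain ⟨q, hq⟩ := getc c mc
  obtain ⟨r, hr⟩ := getc d md
  set e12 := x ⬝ᵥ a
  set e13 := x ⬝ᵥ b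
  set e23 := a ⬝ᵥ b
  -- unit norm equations
  have Ey : (p 0)^2 + (p 1)^2 + (p 2)^2
      + 2*((p 0)*(p 1)*e12 + (p 0)*(p 2)*e13 + (p 1)*(p 2)*e23) = 1 := by
    have e := dot_comb3 x a b y y (p 0) (p 1) (p 2) (p 0) (p 1) (p 2) hp hp
    rw [hx, ha, hb, hy] at e
    linear_combination -e
  have Ec : (q 0)^2 + (q 1)^2 + (q 2)^2
      + 2*((q 0)*(q 1)*e12 + (q 0)*(q 2)*e13 + (q 1)*(q 2)*e23) = 1 := by
    have e := dot_comb3 x a b c c (q 0) (q 1) (q 2) (q 0) (q 1) (q 2) hq hq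
    rw [hx, ha, hb, hc] at e
    linear_combination -e
  have Ed : (r 0)^2 + (r 1)^2 + (r 2)^2
      + 2*((r 0)*(r 1)*e12 + (r 0)*(r 2)*e13 + (r 1)*(r 2)*e23) = 1 := by
    have e := dot_comb3 x a b d d (r 0) (r 1) (r 2) (r 0) (r 1) (r 2) hr hr
    rw [hx, ha, hb, hd] at e
    linear_combination -e
  -- single near-orthogonality relations
  have Hay : |(p 0)*e12 + (p 1) + (p 2)*e23| ≤ η := by
    have e : a ⬝ᵥ y = (p 0)*e12 + (p 1) + (p 2)*e23 := by
      rw [dot_single a x a b y (p 0) (p 1) (p 2) hp, dotProduct_comm a x, ha]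
      ring
    rw [← e]; exact hay
  have Hxd : |(r 0) + (r 1)*e12 + (r 2)*e13| ≤ η := by
    have e : x ⬝ᵥ d = (r 0) + (r 1)*e12 + (r 2)*e13 := by
      rw [dot_single x x a b d (r 0) (r 1) (r 2) hr, hx]
      ring
    rw [← e]; exact hxd
  have Hbc : |(q 0)*e13 + (q 1)*e23 + (q 2)| ≤ η := by
    have e : b ⬝ᵥ c = (q 0)*e13 + (q 1)*e23 + (q 2) := by
      rw [dot_single b x a b c (q 0) (q 1) (q 2) hq, dotProduct_comm b x,
        dotProduct_comm b a, hb]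
      ring
    rw [← e]; exact hbc
  -- pair relations
  have Hyc : |(p 0)*(q 0) + (p 1)*(q 1) + (p 2)*(q 2) + ((p 0)*(q 1) + (p 1)*(q 0))*e12
      + ((p 0)*(q 2) + (p 2)*(q 0))*e13 + ((p 1)*(q 2) + (p 2)*(q 1))*e23| ≤ η := by
    have e := dot_comb3 x a b y c (p 0) (p 1) (p 2) (q 0) (q 1) (q 2) hp hq
    rw [hx, ha, hb] at e
    have e' : y ⬝ᵥ c = (p 0)*(q 0) + (p 1)*(q 1) + (p 2)*(q 2) + ((p 0)*(q 1) + (p 1)*(q 0))*e12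
      + ((p 0)*(q 2) + (p 2)*(q 0))*e13 + ((p 1)*(q 2) + (p 2)*(q 1))*e23 := by
      rw [e]; ring
    rw [← e']; exact hyc
  have Hyd : |(p 0)*(r 0) + (p 1)*(r 1) + (p 2)*(r 2) + ((p 0)*(r 1) + (p 1)*(r 0))*e12
      + ((p 0)*(r 2) + (p 2)*(r 0))*e13 + ((p 1)*(r 2) + (p 2)*(r 1))*e23| ≤ η := by
    have e := dot_comb3 x a b y d (p 0) (p 1) (p 2) (r 0) (r 1) (r 2) hp hr
    rw [hx, ha, hb] at e
    have e' : y ⬝ᵥ d = (p 0)*(r 0) + (p 1)*(r 1) + (p 2)*(r 2) + ((p 0)*(r 1) + (p 1)*(r 0))*e12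
      + ((p 0)*(r 2) + (p 2)*(r 0))*e13 + ((p 1)*(r 2) + (p 2)*(r 1))*e23 := by
      rw [e]; ring
    rw [← e']; exact hyd
  have Hcd : |(q 0)*(r 0) + (q 1)*(r 1) + (q 2)*(r 2) + ((q 0)*(r 1) + (q 1)*(r 0))*e12
      + ((q 0)*(r 2) + (q 2)*(r 0))*e13 + ((q 1)*(r 2) + (q 2)*(r 1))*e23| ≤ η := by
    have e := dot_comb3 x a b c d (q 0) (q 1) (q 2) (r 0) (r 1) (r 2) hq hr
    rw [hx, ha, hb] at e
    have e' : c ⬝ᵥ d = (q 0)*(r 0) + (q 1)*(r 1) + (q 2)*(r 2) + ((q 0)*(r 1) + (q 1)*(r 0))*e12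
      + ((q 0)*(r 2) + (q 2)*(r 0))*e13 + ((q 1)*(r 2) + (q 2)*(r 1))*e23 := by
      rw [e]; ring
    rw [← e']; exact hcd
  have ht : x ⬝ᵥ y = (p 0) + (p 1)*e12 + (p 2)*e13 := by
    rw [dot_single x x a b y (p 0) (p 1) (p 2) hp, hx]
    ring
  exact gadget_scalar η e12 e13 e23 (p 0) (p 1) (p 2) (q 0) (q 1) (q 2) (r 0) (r 1) (r 2)
    (x ⬝ᵥ y) hη0 hη hxa hxb hab Ey Ec Ed Hay Hxd Hbc Hyc Hyd Hcd ht

lemma dot_self_nn {ι : Type*} [Fintype ι] (u : ι → ℝ) : 0 ≤ u ⬝ᵥ u :=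
  Finset.sum_nonneg fun i _ => mul_self_nonneg (u i)

lemma longpick (s0 s1 d : ℝ) (h1 : 0 ≤ s1) (hd : 1999/2000 ≤ d)
    (hcs : d^2 ≤ s0*s1) (hle : s0 ≤ s1) : 1999/2000 ≤ s1 := by
  nlinarith

lemma divb (x h : ℝ) (hx : 1999/2000 ≤ x) (hh : h ≤ 1/2000) (hh0 : 0 ≤ h) :
    x⁻¹ * h ≤ 1/1999 := by
  have hx0 : (0:ℝ) < x := lt_of_lt_of_le (by norm_num) hx
  have h1 : x⁻¹ ≤ ((1999:ℝ)/2000)⁻¹ := by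
    apply inv_anti₀ (by norm_num) hx
  calc x⁻¹*h ≤ ((1999:ℝ)/2000)⁻¹ * (1/2000) :=
        mul_le_mul h1 hh hh0 (by positivity)
  _ ≤ 1/1999 := by norm_num

open Matrix in
lemma trans_key {ι : Type*} [Fintype ι] (u w z : ι → ℝ)
    (hu : u ⬝ᵥ u = 1) (hw : w ⬝ᵥ w = 1) (hz : z ⬝ᵥ z = 1) :
    (u ⬝ᵥ z - (u ⬝ᵥ w)*(w ⬝ᵥ z))^2 ≤ (1 - (u ⬝ᵥ w)^2)*(1 - (w ⬝ᵥ z)^2) := by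
  have hcs := dot_cs (u - (u ⬝ᵥ w) • w) (z - (w ⬝ᵥ z) • w)
  simp only [sub_dotProduct, dotProduct_sub, smul_dotProduct, dotProduct_smul,
    smul_eq_mul] at hcs
  rw [hu, hw, hz, dotProduct_comm w u, dotProduct_comm z w] at hcs
  nlinarith [hcs]

lemma trans_num (tij tjk tik : ℝ) (h1 : 81/100 ≤ tij^2) (h1' : tij^2 ≤ 1)
    (h2 : 81/100 ≤ tjk^2) (h2' : tjk^2 ≤ 1)
    (key : (tik - tij*tjk)^2 ≤ (1 - tij^2)*(1 - tjk^2)) : 1/4 ≤ tik^2 := by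
  have hP : (81/100 : ℝ)*(81/100) ≤ tij^2*tjk^2 :=
    mul_le_mul h1 h2 (by norm_num) (sq_nonneg _)
  have hE : (1 - tij^2)*(1 - tjk^2) ≤ (19/100)*(19/100) :=
    mul_le_mul (by linarith) (by linarith) (by linarith) (by norm_num)
  nlinarith [sq_nonneg (tij*tjk + 2*(tik - tij*tjk))]


lemma sq_to_abs (t c : ℝ) (h : t^2 ≤ c^2) (hc : 0 ≤ c) : |t| ≤ c :=
  abs_le.mpr ⟨by nlinarith, by nlinarith⟩

lemma abs_to_sq (t c : ℝ) (h : |t| ≤ c) : t^2 ≤ c^2 :=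
  sq_le_sq' (abs_le.mp h).1 (abs_le.mp h).2

lemma peeters_edges (N : ℕ) (G : SimpleGraph (Fin N)) (q : Pairs N) :
    (peetersGraph N G).Adj (Sum.inl q.val.1) (Sum.inr (q, 0)) ∧
    (peetersGraph N G).Adj (Sum.inl q.val.1) (Sum.inr (q, 1)) ∧
    (peetersGraph N G).Adj (Sum.inr (q, 0)) (Sum.inr (q, 1)) ∧
    (peetersGraph N G).Adj (Sum.inl q.val.2) (Sum.inr (q, 2)) ∧
    (peetersGraph N G).Adj (Sum.inl q.val.2) (Sum.inr (q, 3)) ∧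
    (peetersGraph N G).Adj (Sum.inr (q, 2)) (Sum.inr (q, 3)) ∧
    (peetersGraph N G).Adj (Sum.inr (q, 0)) (Sum.inl q.val.2) ∧
    (peetersGraph N G).Adj (Sum.inl q.val.1) (Sum.inr (q, 3)) ∧
    (peetersGraph N G).Adj (Sum.inr (q, 1)) (Sum.inr (q, 2)) := by
  refine ⟨?_, ?_, ?_, ?_, ?_, ?_, ?_, ?_, ?_⟩ <;>
    rw [peetersGraph, SimpleGraph.fromRel_adj]
  · exact ⟨by simp, Or.inl (Or.inr ⟨q, Or.inl ⟨rfl, rfl⟩⟩)⟩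
  · exact ⟨by simp, Or.inl (Or.inr ⟨q, Or.inr (Or.inl ⟨rfl, rfl⟩)⟩)⟩
  · exact ⟨by simp, Or.inl (Or.inr ⟨q, Or.inr (Or.inr (Or.inl ⟨rfl, rfl⟩))⟩)⟩
  · exact ⟨by simp, Or.inl (Or.inr ⟨q, Or.inr (Or.inr (Or.inr (Or.inl ⟨rfl, rfl⟩)))⟩)⟩
  · exact ⟨by simp, Or.inl (Or.inr ⟨q, Or.inr (Or.inr (Or.inr (Or.inr (Or.inl ⟨rfl, rfl⟩))))⟩)⟩
  · exact ⟨by simp, Or.inl (Or.inr ⟨q, Or.inr (Or.inr (Or.inr (Or.inr (Or.inr (Or.inl ⟨rfl, rfl⟩)))))⟩)⟩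
  · exact ⟨by simp, Or.inl (Or.inr ⟨q, Or.inr (Or.inr (Or.inr (Or.inr (Or.inr (Or.inr (Or.inl ⟨rfl, rfl⟩))))))⟩)⟩
  · exact ⟨by simp, Or.inl (Or.inr ⟨q, Or.inr (Or.inr (Or.inr (Or.inr (Or.inr (Or.inr (Or.inr (Or.inl ⟨rfl, rfl⟩)))))))⟩)⟩
  · exact ⟨by simp, Or.inl (Or.inr ⟨q, Or.inr (Or.inr (Or.inr (Or.inr (Or.inr (Or.inr (Or.inr (Or.inr ⟨rfl, rfl⟩)))))))⟩)⟩

/-- There is a universal constant `ε₀ > 0` such that for every graph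
`G`, if the `(P3)` input construction `(A, X)` admits symmetric `L, H` with `L` fitting
`X`, `‖H‖_F ≤ ε₀`, `A + L + H ⪰ 0` and `rank (A + L + H) ≤ 3`, then `G` is
3-colorable. -/
theorem stmt8 :
    ∃ ε₀ : ℝ, 0 < ε₀ ∧
      ∀ (N : ℕ) (G : SimpleGraph (Fin N)) (L H : Matrix (Idx N) (Idx N) ℝ),
        L.IsSymm → H.IsSymm → FitsX N G L → frob H ≤ ε₀ →
        (AP3 N + L + H).PosSemidef → (AP3 N + L + H).rank ≤ 3 →
        G.Colorable 3 := by
  classical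
  refine ⟨1/2000, by norm_num, ?_⟩
  intro N G L H hLs hHs hfits hfrob hpsd hrank
  -- entrywise bound on H
  have hHent : ∀ p q, |H p q| ≤ 1/2000 := by
    intro p q
    have h1 : (H p q)^2 ≤ ∑ j, (H p j)^2 :=
      Finset.single_le_sum (f := fun j => (H p j)^2) (fun j _ => sq_nonneg _) (Finset.mem_univ q)
    have h2 : ∑ j, (H p j)^2 ≤ ∑ i, ∑ j, (H i j)^2 :=
      Finset.single_le_sum (f := fun i => ∑ j, (H i j)^2)
        (fun i _ => Finset.sum_nonneg fun j _ => sq_nonneg _) (Finset.mem_univ p)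
    have h3 : |H p q| = Real.sqrt ((H p q)^2) := (Real.sqrt_sq_eq_abs _).symm
    rw [h3]
    calc Real.sqrt ((H p q)^2) ≤ Real.sqrt (∑ i, ∑ j, (H i j)^2) :=
          Real.sqrt_le_sqrt (by linarith)
    _ = frob H := rfl
    _ ≤ 1/2000 := hfrob
  obtain ⟨B, hB⟩ : ∃ B : Matrix (Idx N) (Idx N) ℝ, AP3 N + L + H = Bᴴ * B := by
    open scoped MatrixOrder in
    obtain ⟨B, hB⟩ := CStarAlgebra.nonneg_iff_eq_star_mul_self.mp hpsd.nonneg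
    exact ⟨B, by rw [hB, star_eq_conjTranspose]⟩
  set col : Idx N → (Idx N → ℝ) := fun p i => B i p with hcol
  have hdot : ∀ p q, col p ⬝ᵥ col q = (AP3 N + L + H) p q := by
    intro p q
    rw [hB, Matrix.mul_apply]
    simp [Matrix.conjTranspose_apply, dotProduct, hcol]
  set W := Submodule.span ℝ (Set.range Bᵀ) with hWdef
  have hWr : Module.finrank ℝ W ≤ 3 := by
    have h1 : B.rank = Module.finrank ℝ W := Matrix.rank_eq_finrank_span_cols B
    have h2 : (AP3 N + L + H).rank = B.rank := by
       rw [hB]; exact Matrix.rank_conjTranspose_mul_self B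
    rw [← h1, ← h2]
    exact hrank
  have hcolW : ∀ p, col p ∈ W := by
    intro p
    apply Submodule.subset_span
    exact ⟨p, rfl⟩
  have hvv : ∀ (v : PV N) (μ ν : Fin 3), μ ≠ ν →
      col (v,μ) ⬝ᵥ col (v,ν) = 1 + H (v,μ) (v,ν) := by
    intro v μ ν hμν
    rw [hdot]
    simp [Matrix.add_apply, AP3, hμν, hfits.2 v μ ν hμν]
  have hedge : ∀ p q : Idx N, (peetersGraph N G).Adj p.1 q.1 → col p ⬝ᵥ col q = H p q := by
    intro p q hadj
    rw [hdot]
    have hne : p.1 ≠ q.1 := hadj.ne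
    simp [Matrix.add_apply, AP3, hne, hfits.1 p q hadj]
  -- choose a long vector for each vertex of G'
  have exlong : ∀ v : PV N, ∃ μ : Fin 3, 1999/2000 ≤ col (v,μ) ⬝ᵥ col (v,μ) := by
    intro v
    have h01 : col (v,0) ⬝ᵥ col (v,1) = 1 + H (v,0) (v,1) := hvv v 0 1 (by decide)
    have hH01 := abs_le.mp (hHent (v,0) (v,1))
    have hcs := dot_cs (col (v,0)) (col (v,1))
    have hlow : (1999/2000 : ℝ) ≤ col (v,0) ⬝ᵥ col (v,1) := by
      rw [h01]; linarith [hH01.1]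
    rcases le_total (col (v,0) ⬝ᵥ col (v,0)) (col (v,1) ⬝ᵥ col (v,1)) with hle | hle
    · exact ⟨1, longpick _ _ _ (dot_self_nn _) hlow hcs hle⟩
    · refine ⟨0, longpick _ _ _ (dot_self_nn _) hlow ?_ hle⟩
      calc (col (v,0) ⬝ᵥ col (v,1))^2 ≤ (col (v,0) ⬝ᵥ col (v,0)) * (col (v,1) ⬝ᵥ col (v,1)) := hcs
      _ = (col (v,1) ⬝ᵥ col (v,1)) * (col (v,0) ⬝ᵥ col (v,0)) := by ring
  choose mu hmu using exlong
  set ℓ : PV N → (Idx N → ℝ) :=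
    fun v => (Real.sqrt (col (v, mu v) ⬝ᵥ col (v, mu v)))⁻¹ • col (v, mu v) with hℓ
  have hspos : ∀ v, (0:ℝ) < col (v, mu v) ⬝ᵥ col (v, mu v) :=
    fun v => lt_of_lt_of_le (by norm_num) (hmu v)
  have hunit : ∀ v, ℓ v ⬝ᵥ ℓ v = 1 := by
    intro v
    rw [hℓ]
    simp only [smul_dotProduct, dotProduct_smul, smul_eq_mul]
    rw [← mul_assoc, ← mul_inv, Real.mul_self_sqrt (hspos v).le]
    exact inv_mul_cancel₀ (hspos v).ne'
  have hℓW : ∀ v, ℓ v ∈ W := fun v => Submodule.smul_mem _ _ (hcolW _)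
  have hcross : ∀ v w : PV N, (peetersGraph N G).Adj v w → |ℓ v ⬝ᵥ ℓ w| ≤ 1/1999 := by
    intro v w hadj
    have hsv := hspos v
    have hsw := hspos w
    have hs : (1999/2000:ℝ) ≤ Real.sqrt (col (v, mu v) ⬝ᵥ col (v, mu v))
        * Real.sqrt (col (w, mu w) ⬝ᵥ col (w, mu w)) := by
      rw [← Real.sqrt_mul (hsv.le)]
      have h1 : ((1999:ℝ)/2000)^2 ≤ (col (v, mu v) ⬝ᵥ col (v, mu v))
          * (col (w, mu w) ⬝ᵥ col (w, mu w)) := by nlinarith [hmu v, hmu w]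
      calc (1999/2000:ℝ) = Real.sqrt (((1999:ℝ)/2000)^2) := (Real.sqrt_sq (by norm_num)).symm
      _ ≤ _ := Real.sqrt_le_sqrt h1
    have e : ℓ v ⬝ᵥ ℓ w = ((Real.sqrt (col (v, mu v) ⬝ᵥ col (v, mu v))
        * Real.sqrt (col (w, mu w) ⬝ᵥ col (w, mu w)))⁻¹) * H (v, mu v) (w, mu w) := by
      rw [hℓ]
      simp only [smul_dotProduct, dotProduct_smul, smul_eq_mul]
      rw [hedge (v, mu v) (w, mu w) hadj, mul_inv]
      ring
    rw [e, abs_mul, abs_inv,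
      abs_of_nonneg (mul_nonneg (Real.sqrt_nonneg _) (Real.sqrt_nonneg _))]
    exact divb _ _ hs (hHent _ _) (abs_nonneg _)
  -- dichotomy for distinct original vertices
  have hdich : ∀ i j : Fin N, i ≠ j →
      (ℓ (Sum.inl i) ⬝ᵥ ℓ (Sum.inl j))^2 ≤ 1/100 ∨
        81/100 ≤ (ℓ (Sum.inl i) ⬝ᵥ ℓ (Sum.inl j))^2 := by
    have main : ∀ i j : Fin N, i < j →
        (ℓ (Sum.inl i) ⬝ᵥ ℓ (Sum.inl j))^2 ≤ 1/100 ∨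
          81/100 ≤ (ℓ (Sum.inl i) ⬝ᵥ ℓ (Sum.inl j))^2 := by
      intro i j hij
      obtain ⟨e1, e2, e3, e4, e5, e6, e7, e8, e9⟩ := peeters_edges N G ⟨(i, j), hij⟩
      exact gadget_vec W hWr (ℓ (Sum.inl i)) (ℓ (Sum.inr (⟨(i, j), hij⟩, 0)))
        (ℓ (Sum.inr (⟨(i, j), hij⟩, 1)))
        (ℓ (Sum.inl j)) (ℓ (Sum.inr (⟨(i, j), hij⟩, 2))) (ℓ (Sum.inr (⟨(i, j), hij⟩, 3))) (1/1999)
        (by norm_num) (by norm_num)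
        (hunit _) (hunit _) (hunit _) (hunit _) (hunit _) (hunit _)
        (hℓW _) (hℓW _) (hℓW _) (hℓW _) (hℓW _) (hℓW _)
        (hcross _ _ e1) (hcross _ _ e2) (hcross _ _ e3)
        (hcross _ _ e4) (hcross _ _ e5) (hcross _ _ e6)
        (hcross _ _ e7) (hcross _ _ e8) (hcross _ _ e9)
    intro i j hij
    rcases lt_or_gt_of_ne hij with h | h
    · exact main i j h
    · rw [dotProduct_comm]
      exact main j i h
  have hT1 : ∀ i j : Fin N, (ℓ (Sum.inl i) ⬝ᵥ ℓ (Sum.inl j))^2 ≤ 1 := by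
    intro i j
    have h := dot_cs (ℓ (Sum.inl i)) (ℓ (Sum.inl j))
    rw [hunit, hunit] at h
    simpa using h
  have hRbig : ∀ i j : Fin N, 1/4 ≤ (ℓ (Sum.inl i) ⬝ᵥ ℓ (Sum.inl j))^2 →
      81/100 ≤ (ℓ (Sum.inl i) ⬝ᵥ ℓ (Sum.inl j))^2 := by
    intro i j h
    rcases eq_or_ne i j with rfl | hne
    · rw [hunit]; norm_num
    · rcases hdich i j hne with h' | h'
      · linarith
      · exact h'
  have hRrefl : ∀ i : Fin N, 1/4 ≤ (ℓ (Sum.inl i) ⬝ᵥ ℓ (Sum.inl i))^2 := by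
    intro i; rw [hunit]; norm_num
  have hRsymm : ∀ i j : Fin N, 1/4 ≤ (ℓ (Sum.inl i) ⬝ᵥ ℓ (Sum.inl j))^2 →
      1/4 ≤ (ℓ (Sum.inl j) ⬝ᵥ ℓ (Sum.inl i))^2 := by
    intro i j h
    rw [dotProduct_comm]
    exact h
  have hRtrans : ∀ i j k : Fin N, 1/4 ≤ (ℓ (Sum.inl i) ⬝ᵥ ℓ (Sum.inl j))^2 →
      1/4 ≤ (ℓ (Sum.inl j) ⬝ᵥ ℓ (Sum.inl k))^2 →
      1/4 ≤ (ℓ (Sum.inl i) ⬝ᵥ ℓ (Sum.inl k))^2 := by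
    intro i j k hij hjk
    have h1 := hRbig i j hij
    have h2 := hRbig j k hjk
    have key := trans_key (ℓ (Sum.inl i)) (ℓ (Sum.inl j)) (ℓ (Sum.inl k))
      (hunit _) (hunit _) (hunit _)
    exact trans_num _ _ _ h1 (hT1 i j) h2 (hT1 j k) key
  set st : Setoid (Fin N) :=
    ⟨fun i j => 1/4 ≤ (ℓ (Sum.inl i) ⬝ᵥ ℓ (Sum.inl j))^2,
     ⟨fun i => hRrefl i, @fun i j h => hRsymm i j h, @fun i j k h h' => hRtrans i j k h h'⟩⟩
    with hst
  haveI : DecidableEq (Quotient st) := Classical.decEq _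
  haveI : Fintype (Quotient st) :=
    Fintype.ofSurjective (Quotient.mk st) (fun b => Quotient.exists_rep b)
  have hcard : Fintype.card (Quotient st) ≤ 3 := by
    by_contra hc
    push_neg at hc
    have h4 : Fintype.card (Fin 4) ≤ Fintype.card (Quotient st) := by
      rw [Fintype.card_fin]; omega
    obtain ⟨f⟩ := Function.Embedding.nonempty_of_card_le h4
    have hne : ∀ k l : Fin 4, k ≠ l →
        ¬ (1/4 ≤ (ℓ (Sum.inl (f k).out) ⬝ᵥ ℓ (Sum.inl (f l).out))^2) := by
      intro k l hkl hR
      apply hkl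
      apply f.injective
      rw [← Quotient.out_eq (f k), ← Quotient.out_eq (f l)]
      exact Quotient.sound hR
    have horth : ∀ k l : Fin 4, k ≠ l →
        |(fun m : Fin 4 => ℓ (Sum.inl (f m).out)) k ⬝ᵥ
          (fun m : Fin 4 => ℓ (Sum.inl (f m).out)) l| ≤ 1/10 := by
      intro k l hkl
      have h1 := hne k l hkl
      have hrepne : (f k).out ≠ (f l).out := by
        intro he
        exact h1 (by rw [he]; exact hRrefl _)
      have h2 : (ℓ (Sum.inl (f k).out) ⬝ᵥ ℓ (Sum.inl (f l).out))^2 ≤ 1/100 := by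
        rcases hdich _ _ hrepne with h | h
        · exact h
        · exact absurd (by linarith) h1
      have : (ℓ (Sum.inl (f k).out) ⬝ᵥ ℓ (Sum.inl (f l).out))^2 ≤ (1/10:ℝ)^2 := by
        norm_num
        linarith
      exact sq_to_abs _ _ this (by norm_num)
    have li := almost_orth_li (fun m : Fin 4 => ℓ (Sum.inl (f m).out)) (1/10)
        (fun k => hunit _) horth (by rw [Fintype.card_fin]; norm_num)
    have hsple : Submodule.span ℝ (Set.range fun m : Fin 4 => ℓ (Sum.inl (f m).out)) ≤ W := by
      rw [Submodule.span_le]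
      rintro z ⟨k, rfl⟩
      exact hℓW _
    have h4' := finrank_span_eq_card li
    have hmono := Submodule.finrank_mono hsple
    rw [h4', Fintype.card_fin] at hmono
    omega
  refine ⟨SimpleGraph.Coloring.mk
    (fun i => Fin.castLE hcard ((Fintype.equivFin (Quotient st)) (Quotient.mk st i))) ?_⟩
  intro i j hadj hcol
  have hq : Quotient.mk st i = Quotient.mk st j := by
    apply (Fintype.equivFin (Quotient st)).injective
    exact Fin.castLE_injective hcard hcol
  have hR : 1/4 ≤ (ℓ (Sum.inl i) ⬝ᵥ ℓ (Sum.inl j))^2 := Quotient.exact hq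
  have hadj' : (peetersGraph N G).Adj (Sum.inl i) (Sum.inl j) := by
    rw [peetersGraph, SimpleGraph.fromRel_adj]
    refine ⟨by simp [hadj.ne], Or.inl (Or.inl ⟨i, j, hadj, rfl, rfl⟩)⟩
  have hsmall := abs_to_sq _ _ (hcross _ _ hadj')
  norm_num at hsmall
  linarith

end
end

section
/- Let ε₀ := 10⁻¹². For every graph G with (P3) input construction (A, X), A ∈ ℝ^{3n'×3n'}: suppose L, H ∈ ℝ^{3n'×3n'} are symmetric, L fits X, ‖H‖_F ≤ ε₀, A + L + H is positive semidefinite, and rank(A + L + H) ≤ 3. Let i, j ∈ V(G) be distinct vertices of the original graph G, let μ, ν ∈ {1,2,3}, and set t := (A + L + H)((i,μ),(j,ν)). Then (a) at least one of |t − 1| ≤ 1/20, |t + 1| ≤ 1/20, |t| ≤ 1/20 holds; and (b) if moreover {i,j} ∈ E(G), then |t| ≤ 1/20. -/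
set_option maxHeartbeats 2000000


open Matrix

noncomputable section

lemma abs_mul_le2 {a b A B : ℝ} (ha : |a| ≤ A) (hb : |b| ≤ B) : |a*b| ≤ A*B := by
  rw [abs_mul]
  exact mul_le_mul ha hb (abs_nonneg _) (le_trans (abs_nonneg _) ha)

lemma abs_mul_le4 {a b c d A B C D : ℝ} (ha : |a| ≤ A) (hb : |b| ≤ B) (hc : |c| ≤ C)
    (hd : |d| ≤ D) : |a*b*c*d| ≤ A*B*C*D :=
  abs_mul_le2 (abs_mul_le2 (abs_mul_le2 ha hb) hc) hd

lemma near1_two {x : ℝ} (h : |x - 1| ≤ (1/10^10:ℝ)) : |x| ≤ 2 := by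
  obtain ⟨h1, h2⟩ := abs_le.mp h
  rw [abs_le]; constructor <;> norm_num at h1 h2 ⊢ <;> linarith

lemma mul_near1 {a b : ℝ} (ha : |a - 1| ≤ (1/10^10:ℝ)) (hb : |b - 1| ≤ (1/10^10:ℝ)) :
    |a*b - 1| ≤ 3*(1/10^10:ℝ) := by
  obtain ⟨h1, h2⟩ := abs_le.mp ha
  obtain ⟨h3, h4⟩ := abs_le.mp hb
  rw [abs_le]; constructor <;> nlinarith

lemma mul_near1' {a b : ℝ} (ha : |a - 1| ≤ 3*(1/10^10:ℝ)) (hb : |b - 1| ≤ 3*(1/10^10:ℝ)) :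
    |a*b - 1| ≤ 9*(1/10^10:ℝ) := by
  obtain ⟨h1, h2⟩ := abs_le.mp ha
  obtain ⟨h3, h4⟩ := abs_le.mp hb
  rw [abs_le]; constructor <;> nlinarith

theorem det_fin_four (M : Matrix (Fin 4) (Fin 4) ℝ) : M.det =
    M 0 0*M 1 1*M 2 2*M 3 3 - M 0 0*M 1 1*M 2 3*M 3 2 - M 0 0*M 1 2*M 2 1*M 3 3
  + M 0 0*M 1 2*M 2 3*M 3 1 + M 0 0*M 1 3*M 2 1*M 3 2 - M 0 0*M 1 3*M 2 2*M 3 1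
  - M 0 1*M 1 0*M 2 2*M 3 3 + M 0 1*M 1 0*M 2 3*M 3 2 + M 0 1*M 1 2*M 2 0*M 3 3
  - M 0 1*M 1 2*M 2 3*M 3 0 - M 0 1*M 1 3*M 2 0*M 3 2 + M 0 1*M 1 3*M 2 2*M 3 0
  + M 0 2*M 1 0*M 2 1*M 3 3 - M 0 2*M 1 0*M 2 3*M 3 1 - M 0 2*M 1 1*M 2 0*M 3 3
  + M 0 2*M 1 1*M 2 3*M 3 0 + M 0 2*M 1 3*M 2 0*M 3 1 - M 0 2*M 1 3*M 2 1*M 3 0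
  - M 0 3*M 1 0*M 2 1*M 3 2 + M 0 3*M 1 0*M 2 2*M 3 1 + M 0 3*M 1 1*M 2 0*M 3 2
  - M 0 3*M 1 1*M 2 2*M 3 0 - M 0 3*M 1 2*M 2 0*M 3 1 + M 0 3*M 1 2*M 2 1*M 3 0 := by
  rw [Matrix.det_succ_row_zero]
  simp [Fin.sum_univ_succ, Matrix.det_fin_three, Fin.succAbove,
    show (Fin.succ 2:Fin 4)=3 from rfl, show (Fin.castSucc 2:Fin 4)=2 from rfl,
    show ((1:Fin 4) < 3) from by decide]
  ring

variable {ι : Type*} [Fintype ι] [DecidableEq ι]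

lemma psd_diag {M : Matrix ι ι ℝ} (h : M.PosSemidef) (p : ι) : 0 ≤ M p p := by
  have := h.dotProduct_mulVec_nonneg (Pi.single p 1)
  simpa [dotProduct, mulVec, Pi.single_apply, Finset.sum_ite_eq, mul_ite, ite_mul] using this

lemma psd_quad {M : Matrix ι ι ℝ} (h : M.PosSemidef) (p q : ι) (a b : ℝ) :
    0 ≤ a*a*M p p + a*b*M p q + b*a*M q p + b*b*M q q := by
  have h2 := h.dotProduct_mulVec_nonneg (Pi.single p a + Pi.single q b)
  by_cases hpq : p = q
  · subst hpq
    nlinarith [sq_nonneg (a+b), sq_nonneg (a-b), psd_diag h p]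
  · simp only [star_trivial, dotProduct, mulVec, Pi.add_apply, Pi.single_apply,
      mul_add, add_mul, ite_mul, mul_ite, zero_mul, mul_zero, Finset.sum_add_distrib,
      Finset.sum_ite_eq, Finset.sum_ite_eq', Finset.mem_univ, if_true,
      hpq, Ne.symm hpq, if_false] at h2
    ring_nf at h2 ⊢
    linarith [h2]

lemma psd_cs {M : Matrix ι ι ℝ} (h : M.PosSemidef) (hsym : ∀ p q, M p q = M q p) (p q : ι) :
    M p q * M p q ≤ M p p * M q q := by
  have h1 := psd_quad h p q (M p q) (-(M p p))
  have d1 := psd_diag h p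
  have d2 := psd_diag h q
  rw [hsym q p] at h1
  rcases le_or_gt (M p q * M p q) (M p p * M q q) with hle | hlt
  · exact hle
  · exfalso
    have key1 : 0 ≤ M p p * (M p p * M q q - M p q * M p q) := by nlinarith [h1]
    have hpp : M p p ≤ 0 := by
      by_contra h'
      push_neg at h'
      have := mul_neg_of_pos_of_neg h' (by linarith : M p p * M q q - M p q * M p q < 0)
      linarith
    have hpp0 : M p p = 0 := le_antisymm hpp d1
    have h4 := psd_quad h p q (-(M q q + 1)) (2 * M p q)
    rw [hsym q p, hpp0] at h4
    rw [hpp0] at hlt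
    nlinarith [h4, hlt]

lemma det4_zero (M : Matrix ι ι ℝ) (hrank : M.rank ≤ 3) (f g : Fin 4 → ι) :
    (M.submatrix f g).det = 0 := by
  have e1 : (1 : Matrix ι ι ℝ).submatrix f (Equiv.refl ι) * M = M.submatrix f id := by
    simpa using one_submatrix_mul f (Equiv.refl ι) M
  have e2 : (M.submatrix f id) * (1 : Matrix ι ι ℝ).submatrix (Equiv.refl ι) g
      = M.submatrix f g := by
    simpa [submatrix_submatrix] using mul_submatrix_one (Equiv.refl ι) g (M.submatrix f id)
  have h1 : (M.submatrix f g).rank ≤ M.rank := by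
    calc (M.submatrix f g).rank
        = ((1 : Matrix ι ι ℝ).submatrix f (Equiv.refl ι) * M
            * (1 : Matrix ι ι ℝ).submatrix (Equiv.refl ι) g).rank := by rw [e1, e2]
      _ ≤ ((1 : Matrix ι ι ℝ).submatrix f (Equiv.refl ι) * M).rank := rank_mul_le_left _ _
      _ ≤ M.rank := rank_mul_le_right _ _
  by_contra hdet
  have hu : IsUnit (M.submatrix f g) := (Matrix.isUnit_iff_isUnit_det _).mpr
    (isUnit_iff_ne_zero.mpr hdet)
  have := Matrix.rank_of_isUnit _ hu
  rw [Fintype.card_fin] at this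
  omega

lemma lemS1 (x00 x01 x02 x03 x10 x11 x12 x13 x20 x21 x22 x23 x30 x31 x32 x33 : ℝ)
    (hd0 : 0 ≤ x00) (hd1 : 0 ≤ x11) (hg : 1/2 ≤ x22) (hh : 1/2 ≤ x33)
    (hp01 : |x01| ≤ 2) (hp10 : |x10| ≤ 2) (hpsd : x01*x10 ≤ x00*x11)
    (he02 : |x02| ≤ (1/10^12:ℝ))
    (he03 : |x03| ≤ (1/10^12:ℝ))
    (he12 : |x12| ≤ (1/10^12:ℝ))
    (he13 : |x13| ≤ (1/10^12:ℝ))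
    (he20 : |x20| ≤ (1/10^12:ℝ))
    (he21 : |x21| ≤ (1/10^12:ℝ))
    (he23 : |x23| ≤ (1/10^12:ℝ))
    (he30 : |x30| ≤ (1/10^12:ℝ))
    (he31 : |x31| ≤ (1/10^12:ℝ))
    (he32 : |x32| ≤ (1/10^12:ℝ))
    (hdet : x00*x11*x22*x33 - x00*x11*x23*x32 - x00*x12*x21*x33 + x00*x12*x23*x31 + x00*x13*x21*x32 - x00*x13*x22*x31 - x01*x10*x22*x33 + x01*x10*x23*x32 + x01*x12*x20*x33 - x01*x12*x23*x30 - x01*x13*x20*x32 + x01*x13*x22*x30 + x02*x10*x21*x33 - x02*x10*x23*x31 - x02*x11*x20*x33 + x02*x11*x23*x30 + x02*x13*x20*x31 - x02*x13*x21*x30 - x03*x10*x21*x32 + x03*x10*x22*x31 + x03*x11*x20*x32 - x03*x11*x22*x30 - x03*x12*x20*x31 + x03*x12*x21*x30 = 0) :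
    x00*x11 ≤ x01*x10 + (1/10^12:ℝ)*(x00+x11+2) := by
  have hT0 : |x00| ≤ x00+x11+2 := by rw [abs_of_nonneg hd0]; linarith only [hd1]
  have hT1 : |x11| ≤ x00+x11+2 := by rw [abs_of_nonneg hd1]; linarith only [hd0]
  have hT01 : |x01| ≤ x00+x11+2 := le_trans hp01 (by linarith only [hd0, hd1])
  have hT10 : |x10| ≤ x00+x11+2 := le_trans hp10 (by linarith only [hd0, hd1])
  have hV : (1:ℝ)/4 ≤ x22*x33 := by have h := mul_le_mul hg hh (by norm_num) (by linarith only [hg] : (0:ℝ) ≤ x22); linarith only [h]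
  have hV22 : |x22| ≤ 2*(x22*x33) := by rw [abs_of_nonneg (by linarith only [hg] : (0:ℝ) ≤ x22)]; have h := mul_nonneg (show (0:ℝ) ≤ x22 by linarith only [hg]) (show (0:ℝ) ≤ 2*x33 - 1 by linarith only [hh]); nlinarith [h]
  have hV33 : |x33| ≤ 2*(x22*x33) := by rw [abs_of_nonneg (by linarith only [hh] : (0:ℝ) ≤ x33)]; have h := mul_nonneg (show (0:ℝ) ≤ x33 by linarith only [hh]) (show (0:ℝ) ≤ 2*x22 - 1 by linarith only [hg]); nlinarith [h]
  have hV23 : |x23| ≤ 2*(x22*x33) := le_trans he23 (by linarith only [hV])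
  have hV32 : |x32| ≤ 2*(x22*x33) := le_trans he32 (by linarith only [hV])
  have hTV : (1:ℝ) ≤ (x00+x11+2)*(2*(x22*x33)) := by have h := mul_le_mul (show (2:ℝ) ≤ x00+x11+2 by linarith only [hd0, hd1]) (show (1:ℝ)/2 ≤ 2*(x22*x33) by linarith only [hV]) (by norm_num) (by linarith only [hd0, hd1]); linarith only [h]
  have hE4cmp : (1/10^12:ℝ)*(1/10^12:ℝ)*(1/10^12:ℝ)*(1/10^12:ℝ) ≤ (1/10^12:ℝ)*(1/10^12:ℝ)*((x00+x11+2)*(2*(x22*x33))) := by nlinarith [hTV]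
  have hX : 0 ≤ x00*x11 - x01*x10 := by linarith only [hpsd]
  have hax := abs_mul_le2 he23 he32
  have h23 : x23*x32 ≤ 4*(1/10^12:ℝ)^2*(x22*x33) := le_trans (le_abs_self _) (le_trans hax (by linarith only [hV]))
  have hXe := mul_le_mul_of_nonneg_left h23 hX
  have hb0 : |x00*x12*x21*x33| ≤ (x00+x11+2)*(1/10^12:ℝ)*(1/10^12:ℝ)*(2*(x22*x33)) := abs_mul_le4 hT0 he12 he21 hV33
  obtain ⟨hb0l, hb0r⟩ := abs_le.mp hb0
  have hb1 : |x00*x12*x23*x31| ≤ (x00+x11+2)*(1/10^12:ℝ)*(2*(x22*x33))*(1/10^12:ℝ) := abs_mul_le4 hT0 he12 hV23 he31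
  obtain ⟨hb1l, hb1r⟩ := abs_le.mp hb1
  have hb2 : |x00*x13*x21*x32| ≤ (x00+x11+2)*(1/10^12:ℝ)*(1/10^12:ℝ)*(2*(x22*x33)) := abs_mul_le4 hT0 he13 he21 hV32
  obtain ⟨hb2l, hb2r⟩ := abs_le.mp hb2
  have hb3 : |x00*x13*x22*x31| ≤ (x00+x11+2)*(1/10^12:ℝ)*(2*(x22*x33))*(1/10^12:ℝ) := abs_mul_le4 hT0 he13 hV22 he31
  obtain ⟨hb3l, hb3r⟩ := abs_le.mp hb3
  have hb4 : |x01*x12*x20*x33| ≤ (x00+x11+2)*(1/10^12:ℝ)*(1/10^12:ℝ)*(2*(x22*x33)) := abs_mul_le4 hT01 he12 he20 hV33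
  obtain ⟨hb4l, hb4r⟩ := abs_le.mp hb4
  have hb5 : |x01*x12*x23*x30| ≤ (x00+x11+2)*(1/10^12:ℝ)*(2*(x22*x33))*(1/10^12:ℝ) := abs_mul_le4 hT01 he12 hV23 he30
  obtain ⟨hb5l, hb5r⟩ := abs_le.mp hb5
  have hb6 : |x01*x13*x20*x32| ≤ (x00+x11+2)*(1/10^12:ℝ)*(1/10^12:ℝ)*(2*(x22*x33)) := abs_mul_le4 hT01 he13 he20 hV32
  obtain ⟨hb6l, hb6r⟩ := abs_le.mp hb6
  have hb7 : |x01*x13*x22*x30| ≤ (x00+x11+2)*(1/10^12:ℝ)*(2*(x22*x33))*(1/10^12:ℝ) := abs_mul_le4 hT01 he13 hV22 he30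
  obtain ⟨hb7l, hb7r⟩ := abs_le.mp hb7
  have hb8 : |x02*x10*x21*x33| ≤ (1/10^12:ℝ)*(x00+x11+2)*(1/10^12:ℝ)*(2*(x22*x33)) := abs_mul_le4 he02 hT10 he21 hV33
  obtain ⟨hb8l, hb8r⟩ := abs_le.mp hb8
  have hb9 : |x02*x10*x23*x31| ≤ (1/10^12:ℝ)*(x00+x11+2)*(2*(x22*x33))*(1/10^12:ℝ) := abs_mul_le4 he02 hT10 hV23 he31
  obtain ⟨hb9l, hb9r⟩ := abs_le.mp hb9
  have hb10 : |x02*x11*x20*x33| ≤ (1/10^12:ℝ)*(x00+x11+2)*(1/10^12:ℝ)*(2*(x22*x33)) := abs_mul_le4 he02 hT1 he20 hV33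
  obtain ⟨hb10l, hb10r⟩ := abs_le.mp hb10
  have hb11 : |x02*x11*x23*x30| ≤ (1/10^12:ℝ)*(x00+x11+2)*(2*(x22*x33))*(1/10^12:ℝ) := abs_mul_le4 he02 hT1 hV23 he30
  obtain ⟨hb11l, hb11r⟩ := abs_le.mp hb11
  have hb12 : |x02*x13*x20*x31| ≤ (1/10^12:ℝ)*(1/10^12:ℝ)*(1/10^12:ℝ)*(1/10^12:ℝ) := abs_mul_le4 he02 he13 he20 he31
  obtain ⟨hb12l, hb12r⟩ := abs_le.mp hb12
  have hb13 : |x02*x13*x21*x30| ≤ (1/10^12:ℝ)*(1/10^12:ℝ)*(1/10^12:ℝ)*(1/10^12:ℝ) := abs_mul_le4 he02 he13 he21 he30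
  obtain ⟨hb13l, hb13r⟩ := abs_le.mp hb13
  have hb14 : |x03*x10*x21*x32| ≤ (1/10^12:ℝ)*(x00+x11+2)*(1/10^12:ℝ)*(2*(x22*x33)) := abs_mul_le4 he03 hT10 he21 hV32
  obtain ⟨hb14l, hb14r⟩ := abs_le.mp hb14
  have hb15 : |x03*x10*x22*x31| ≤ (1/10^12:ℝ)*(x00+x11+2)*(2*(x22*x33))*(1/10^12:ℝ) := abs_mul_le4 he03 hT10 hV22 he31
  obtain ⟨hb15l, hb15r⟩ := abs_le.mp hb15
  have hb16 : |x03*x11*x20*x32| ≤ (1/10^12:ℝ)*(x00+x11+2)*(1/10^12:ℝ)*(2*(x22*x33)) := abs_mul_le4 he03 hT1 he20 hV32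
  obtain ⟨hb16l, hb16r⟩ := abs_le.mp hb16
  have hb17 : |x03*x11*x22*x30| ≤ (1/10^12:ℝ)*(x00+x11+2)*(2*(x22*x33))*(1/10^12:ℝ) := abs_mul_le4 he03 hT1 hV22 he30
  obtain ⟨hb17l, hb17r⟩ := abs_le.mp hb17
  have hb18 : |x03*x12*x20*x31| ≤ (1/10^12:ℝ)*(1/10^12:ℝ)*(1/10^12:ℝ)*(1/10^12:ℝ) := abs_mul_le4 he03 he12 he20 he31
  obtain ⟨hb18l, hb18r⟩ := abs_le.mp hb18
  have hb19 : |x03*x12*x21*x30| ≤ (1/10^12:ℝ)*(1/10^12:ℝ)*(1/10^12:ℝ)*(1/10^12:ℝ) := abs_mul_le4 he03 he12 he21 he30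
  obtain ⟨hb19l, hb19r⟩ := abs_le.mp hb19
  have heq : (x00*x11 - x01*x10)*(x22*x33 - x23*x32) = -(-x00*x12*x21*x33 + x00*x12*x23*x31 + x00*x13*x21*x32 - x00*x13*x22*x31 + x01*x12*x20*x33 - x01*x12*x23*x30 - x01*x13*x20*x32 + x01*x13*x22*x30 + x02*x10*x21*x33 - x02*x10*x23*x31 - x02*x11*x20*x33 + x02*x11*x23*x30 + x02*x13*x20*x31 - x02*x13*x21*x30 - x03*x10*x21*x32 + x03*x10*x22*x31 + x03*x11*x20*x32 - x03*x11*x22*x30 - x03*x12*x20*x31 + x03*x12*x21*x30) := by linear_combination hdet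
  have hbig : (x00*x11 - x01*x10)*(x22*x33) ≤ (40*(1/10^12:ℝ)^2*(x00+x11+2) + 4*(1/10^12:ℝ)^2*(x00*x11-x01*x10))*(x22*x33) := by
    linarith only [heq, hXe, hE4cmp, hV, hb0l, hb0r, hb1l, hb1r, hb2l, hb2r, hb3l, hb3r, hb4l, hb4r, hb5l, hb5r, hb6l, hb6r, hb7l, hb7r, hb8l, hb8r, hb9l, hb9r, hb10l, hb10r, hb11l, hb11r, hb12l, hb12r, hb13l, hb13r, hb14l, hb14r, hb15l, hb15r, hb16l, hb16r, hb17l, hb17r, hb18l, hb18r, hb19l, hb19r]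
  have hdiv := le_of_mul_le_mul_right hbig (by linarith : (0:ℝ) < x22*x33)
  linarith only [hdiv, hX, hd0, hd1]

lemma lemA (x00 x01 x02 x03 x10 x11 x12 x13 x20 x21 x22 x23 x30 x31 x32 x33 : ℝ)
    (hn00 : |x00 - 1| ≤ (1/10^10:ℝ))
    (hn11 : |x11 - 1| ≤ (1/10^10:ℝ))
    (hn22 : |x22 - 1| ≤ (1/10^10:ℝ))
    (hn33 : |x33 - 1| ≤ (1/10^10:ℝ))
    (hu01 : |x01| ≤ 2)
    (hu02 : |x02| ≤ 2)
    (hu10 : |x10| ≤ 2)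
    (hu20 : |x20| ≤ 2)
    (he03 : |x03| ≤ (1/10^12:ℝ))
    (he12 : |x12| ≤ (1/10^12:ℝ))
    (he13 : |x13| ≤ (1/10^12:ℝ))
    (he21 : |x21| ≤ (1/10^12:ℝ))
    (he23 : |x23| ≤ (1/10^12:ℝ))
    (he30 : |x30| ≤ (1/10^12:ℝ))
    (he31 : |x31| ≤ (1/10^12:ℝ))
    (he32 : |x32| ≤ (1/10^12:ℝ))
    (hdet : x00*x11*x22*x33 - x00*x11*x23*x32 - x00*x12*x21*x33 + x00*x12*x23*x31 + x00*x13*x21*x32 - x00*x13*x22*x31 - x01*x10*x22*x33 + x01*x10*x23*x32 + x01*x12*x20*x33 - x01*x12*x23*x30 - x01*x13*x20*x32 + x01*x13*x22*x30 + x02*x10*x21*x33 - x02*x10*x23*x31 - x02*x11*x20*x33 + x02*x11*x23*x30 + x02*x13*x20*x31 - x02*x13*x21*x30 - x03*x10*x21*x32 + x03*x10*x22*x31 + x03*x11*x20*x32 - x03*x11*x22*x30 - x03*x12*x20*x31 + x03*x12*x21*x30 = 0) :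
    |x01*x10 + x02*x20 - 1| ≤ 1/100 := by
  have hb00 : |x00| ≤ 2 := near1_two hn00
  have hb11 : |x11| ≤ 2 := near1_two hn11
  have hb22 : |x22| ≤ 2 := near1_two hn22
  have hb33 : |x33| ≤ 2 := near1_two hn33
  have hb03 : |x03| ≤ 2 := le_trans he03 (by norm_num)
  have hb12 : |x12| ≤ 2 := le_trans he12 (by norm_num)
  have hb13 : |x13| ≤ 2 := le_trans he13 (by norm_num)
  have hb21 : |x21| ≤ 2 := le_trans he21 (by norm_num)
  have hb23 : |x23| ≤ 2 := le_trans he23 (by norm_num)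
  have hb30 : |x30| ≤ 2 := le_trans he30 (by norm_num)
  have hb31 : |x31| ≤ 2 := le_trans he31 (by norm_num)
  have hb32 : |x32| ≤ 2 := le_trans he32 (by norm_num)
  have hb01 : |x01| ≤ 2 := hu01
  have hb02 : |x02| ≤ 2 := hu02
  have hb10 : |x10| ≤ 2 := hu10
  have hb20 : |x20| ≤ 2 := hu20
  have hm0 : |x00*x11*x23*x32| ≤ 2*2*(1/10^12:ℝ)*2 := abs_mul_le4 hb00 hb11 he23 hb32
  obtain ⟨hm0l, hm0r⟩ := abs_le.mp hm0
  have hm1 : |x00*x12*x21*x33| ≤ 2*(1/10^12:ℝ)*2*2 := abs_mul_le4 hb00 he12 hb21 hb33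
  obtain ⟨hm1l, hm1r⟩ := abs_le.mp hm1
  have hm2 : |x00*x12*x23*x31| ≤ 2*(1/10^12:ℝ)*2*2 := abs_mul_le4 hb00 he12 hb23 hb31
  obtain ⟨hm2l, hm2r⟩ := abs_le.mp hm2
  have hm3 : |x00*x13*x21*x32| ≤ 2*(1/10^12:ℝ)*2*2 := abs_mul_le4 hb00 he13 hb21 hb32
  obtain ⟨hm3l, hm3r⟩ := abs_le.mp hm3
  have hm4 : |x00*x13*x22*x31| ≤ 2*(1/10^12:ℝ)*2*2 := abs_mul_le4 hb00 he13 hb22 hb31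
  obtain ⟨hm4l, hm4r⟩ := abs_le.mp hm4
  have hm5 : |x01*x10*x23*x32| ≤ 2*2*(1/10^12:ℝ)*2 := abs_mul_le4 hb01 hb10 he23 hb32
  obtain ⟨hm5l, hm5r⟩ := abs_le.mp hm5
  have hm6 : |x01*x12*x20*x33| ≤ 2*(1/10^12:ℝ)*2*2 := abs_mul_le4 hb01 he12 hb20 hb33
  obtain ⟨hm6l, hm6r⟩ := abs_le.mp hm6
  have hm7 : |x01*x12*x23*x30| ≤ 2*(1/10^12:ℝ)*2*2 := abs_mul_le4 hb01 he12 hb23 hb30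
  obtain ⟨hm7l, hm7r⟩ := abs_le.mp hm7
  have hm8 : |x01*x13*x20*x32| ≤ 2*(1/10^12:ℝ)*2*2 := abs_mul_le4 hb01 he13 hb20 hb32
  obtain ⟨hm8l, hm8r⟩ := abs_le.mp hm8
  have hm9 : |x01*x13*x22*x30| ≤ 2*(1/10^12:ℝ)*2*2 := abs_mul_le4 hb01 he13 hb22 hb30
  obtain ⟨hm9l, hm9r⟩ := abs_le.mp hm9
  have hm10 : |x02*x10*x21*x33| ≤ 2*2*(1/10^12:ℝ)*2 := abs_mul_le4 hb02 hb10 he21 hb33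
  obtain ⟨hm10l, hm10r⟩ := abs_le.mp hm10
  have hm11 : |x02*x10*x23*x31| ≤ 2*2*(1/10^12:ℝ)*2 := abs_mul_le4 hb02 hb10 he23 hb31
  obtain ⟨hm11l, hm11r⟩ := abs_le.mp hm11
  have hm12 : |x02*x11*x23*x30| ≤ 2*2*(1/10^12:ℝ)*2 := abs_mul_le4 hb02 hb11 he23 hb30
  obtain ⟨hm12l, hm12r⟩ := abs_le.mp hm12
  have hm13 : |x02*x13*x20*x31| ≤ 2*(1/10^12:ℝ)*2*2 := abs_mul_le4 hb02 he13 hb20 hb31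
  obtain ⟨hm13l, hm13r⟩ := abs_le.mp hm13
  have hm14 : |x02*x13*x21*x30| ≤ 2*(1/10^12:ℝ)*2*2 := abs_mul_le4 hb02 he13 hb21 hb30
  obtain ⟨hm14l, hm14r⟩ := abs_le.mp hm14
  have hm15 : |x03*x10*x21*x32| ≤ (1/10^12:ℝ)*2*2*2 := abs_mul_le4 he03 hb10 hb21 hb32
  obtain ⟨hm15l, hm15r⟩ := abs_le.mp hm15
  have hm16 : |x03*x10*x22*x31| ≤ (1/10^12:ℝ)*2*2*2 := abs_mul_le4 he03 hb10 hb22 hb31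
  obtain ⟨hm16l, hm16r⟩ := abs_le.mp hm16
  have hm17 : |x03*x11*x20*x32| ≤ (1/10^12:ℝ)*2*2*2 := abs_mul_le4 he03 hb11 hb20 hb32
  obtain ⟨hm17l, hm17r⟩ := abs_le.mp hm17
  have hm18 : |x03*x11*x22*x30| ≤ (1/10^12:ℝ)*2*2*2 := abs_mul_le4 he03 hb11 hb22 hb30
  obtain ⟨hm18l, hm18r⟩ := abs_le.mp hm18
  have hm19 : |x03*x12*x20*x31| ≤ (1/10^12:ℝ)*2*2*2 := abs_mul_le4 he03 hb12 hb20 hb31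
  obtain ⟨hm19l, hm19r⟩ := abs_le.mp hm19
  have hm20 : |x03*x12*x21*x30| ≤ (1/10^12:ℝ)*2*2*2 := abs_mul_le4 he03 hb12 hb21 hb30
  obtain ⟨hm20l, hm20r⟩ := abs_le.mp hm20
  have h1 := mul_near1 hn00 hn11
  have h2 := mul_near1 hn22 hn33
  have h3 := mul_near1 hn11 hn33
  have h4 := mul_near1' h1 h2
  obtain ⟨h4l, h4r⟩ := abs_le.mp h4
  have ha0110 : |x01*x10| ≤ 4 := le_trans (abs_mul_le2 hu01 hu10) (by norm_num)
  have ha0220 : |x02*x20| ≤ 4 := le_trans (abs_mul_le2 hu02 hu20) (by norm_num)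
  have h5 : |x01*x10*x22*x33 - x01*x10| ≤ 12*(1/10^10:ℝ) := by
    have hx := abs_mul_le2 ha0110 h2
    rw [show (x01*x10)*(x22*x33 - 1) = x01*x10*x22*x33 - x01*x10 by ring] at hx
    linarith only [hx]
  obtain ⟨h5l, h5r⟩ := abs_le.mp h5
  have h6 : |x02*x20*x11*x33 - x02*x20| ≤ 12*(1/10^10:ℝ) := by
    have hx := abs_mul_le2 ha0220 h3
    rw [show (x02*x20)*(x11*x33 - 1) = x02*x20*x11*x33 - x02*x20 by ring] at hx
    linarith only [hx]
  obtain ⟨h6l, h6r⟩ := abs_le.mp h6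
  rw [abs_le]; constructor <;> linarith only [hdet, h4l, h4r, h5l, h5r, h6l, h6r, hm0l, hm1l, hm2l, hm3l, hm4l, hm5l, hm6l, hm7l, hm8l, hm9l, hm10l, hm11l, hm12l, hm13l, hm14l, hm15l, hm16l, hm17l, hm18l, hm19l, hm20l, hm0r, hm1r, hm2r, hm3r, hm4r, hm5r, hm6r, hm7r, hm8r, hm9r, hm10r, hm11r, hm12r, hm13r, hm14r, hm15r, hm16r, hm17r, hm18r, hm19r, hm20r]

lemma lemB (x00 x01 x02 x03 x10 x11 x12 x13 x20 x21 x22 x23 x30 x31 x32 x33 : ℝ)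
    (hn11 : |x11 - 1| ≤ (1/10^10:ℝ))
    (hn22 : |x22 - 1| ≤ (1/10^10:ℝ))
    (hn33 : |x33 - 1| ≤ (1/10^10:ℝ))
    (hu01 : |x01| ≤ 2)
    (hu02 : |x02| ≤ 2)
    (hu10 : |x10| ≤ 2)
    (hu30 : |x30| ≤ 2)
    (he00 : |x00| ≤ (1/10^12:ℝ))
    (he03 : |x03| ≤ (1/10^12:ℝ))
    (he12 : |x12| ≤ (1/10^12:ℝ))
    (he13 : |x13| ≤ (1/10^12:ℝ))
    (he20 : |x20| ≤ (1/10^12:ℝ))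
    (he21 : |x21| ≤ (1/10^12:ℝ))
    (he23 : |x23| ≤ (1/10^12:ℝ))
    (he31 : |x31| ≤ (1/10^12:ℝ))
    (he32 : |x32| ≤ (1/10^12:ℝ))
    (hdet : x00*x11*x22*x33 - x00*x11*x23*x32 - x00*x12*x21*x33 + x00*x12*x23*x31 + x00*x13*x21*x32 - x00*x13*x22*x31 - x01*x10*x22*x33 + x01*x10*x23*x32 + x01*x12*x20*x33 - x01*x12*x23*x30 - x01*x13*x20*x32 + x01*x13*x22*x30 + x02*x10*x21*x33 - x02*x10*x23*x31 - x02*x11*x20*x33 + x02*x11*x23*x30 + x02*x13*x20*x31 - x02*x13*x21*x30 - x03*x10*x21*x32 + x03*x10*x22*x31 + x03*x11*x20*x32 - x03*x11*x22*x30 - x03*x12*x20*x31 + x03*x12*x21*x30 = 0) :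
    |x01*x10| ≤ 1/10^8 := by
  have hb11 : |x11| ≤ 2 := near1_two hn11
  have hb22 : |x22| ≤ 2 := near1_two hn22
  have hb33 : |x33| ≤ 2 := near1_two hn33
  have hb00 : |x00| ≤ 2 := le_trans he00 (by norm_num)
  have hb03 : |x03| ≤ 2 := le_trans he03 (by norm_num)
  have hb12 : |x12| ≤ 2 := le_trans he12 (by norm_num)
  have hb13 : |x13| ≤ 2 := le_trans he13 (by norm_num)
  have hb20 : |x20| ≤ 2 := le_trans he20 (by norm_num)
  have hb21 : |x21| ≤ 2 := le_trans he21 (by norm_num)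
  have hb23 : |x23| ≤ 2 := le_trans he23 (by norm_num)
  have hb31 : |x31| ≤ 2 := le_trans he31 (by norm_num)
  have hb32 : |x32| ≤ 2 := le_trans he32 (by norm_num)
  have hb01 : |x01| ≤ 2 := hu01
  have hb02 : |x02| ≤ 2 := hu02
  have hb10 : |x10| ≤ 2 := hu10
  have hb30 : |x30| ≤ 2 := hu30
  have hm0 : |x00*x11*x22*x33| ≤ (1/10^12:ℝ)*2*2*2 := abs_mul_le4 he00 hb11 hb22 hb33
  obtain ⟨hm0l, hm0r⟩ := abs_le.mp hm0
  have hm1 : |x00*x11*x23*x32| ≤ (1/10^12:ℝ)*2*2*2 := abs_mul_le4 he00 hb11 hb23 hb32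
  obtain ⟨hm1l, hm1r⟩ := abs_le.mp hm1
  have hm2 : |x00*x12*x21*x33| ≤ (1/10^12:ℝ)*2*2*2 := abs_mul_le4 he00 hb12 hb21 hb33
  obtain ⟨hm2l, hm2r⟩ := abs_le.mp hm2
  have hm3 : |x00*x12*x23*x31| ≤ (1/10^12:ℝ)*2*2*2 := abs_mul_le4 he00 hb12 hb23 hb31
  obtain ⟨hm3l, hm3r⟩ := abs_le.mp hm3
  have hm4 : |x00*x13*x21*x32| ≤ (1/10^12:ℝ)*2*2*2 := abs_mul_le4 he00 hb13 hb21 hb32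
  obtain ⟨hm4l, hm4r⟩ := abs_le.mp hm4
  have hm5 : |x00*x13*x22*x31| ≤ (1/10^12:ℝ)*2*2*2 := abs_mul_le4 he00 hb13 hb22 hb31
  obtain ⟨hm5l, hm5r⟩ := abs_le.mp hm5
  have hm6 : |x01*x10*x23*x32| ≤ 2*2*(1/10^12:ℝ)*2 := abs_mul_le4 hb01 hb10 he23 hb32
  obtain ⟨hm6l, hm6r⟩ := abs_le.mp hm6
  have hm7 : |x01*x12*x20*x33| ≤ 2*(1/10^12:ℝ)*2*2 := abs_mul_le4 hb01 he12 hb20 hb33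
  obtain ⟨hm7l, hm7r⟩ := abs_le.mp hm7
  have hm8 : |x01*x12*x23*x30| ≤ 2*(1/10^12:ℝ)*2*2 := abs_mul_le4 hb01 he12 hb23 hb30
  obtain ⟨hm8l, hm8r⟩ := abs_le.mp hm8
  have hm9 : |x01*x13*x20*x32| ≤ 2*(1/10^12:ℝ)*2*2 := abs_mul_le4 hb01 he13 hb20 hb32
  obtain ⟨hm9l, hm9r⟩ := abs_le.mp hm9
  have hm10 : |x01*x13*x22*x30| ≤ 2*(1/10^12:ℝ)*2*2 := abs_mul_le4 hb01 he13 hb22 hb30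
  obtain ⟨hm10l, hm10r⟩ := abs_le.mp hm10
  have hm11 : |x02*x10*x21*x33| ≤ 2*2*(1/10^12:ℝ)*2 := abs_mul_le4 hb02 hb10 he21 hb33
  obtain ⟨hm11l, hm11r⟩ := abs_le.mp hm11
  have hm12 : |x02*x10*x23*x31| ≤ 2*2*(1/10^12:ℝ)*2 := abs_mul_le4 hb02 hb10 he23 hb31
  obtain ⟨hm12l, hm12r⟩ := abs_le.mp hm12
  have hm13 : |x02*x11*x20*x33| ≤ 2*2*(1/10^12:ℝ)*2 := abs_mul_le4 hb02 hb11 he20 hb33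
  obtain ⟨hm13l, hm13r⟩ := abs_le.mp hm13
  have hm14 : |x02*x11*x23*x30| ≤ 2*2*(1/10^12:ℝ)*2 := abs_mul_le4 hb02 hb11 he23 hb30
  obtain ⟨hm14l, hm14r⟩ := abs_le.mp hm14
  have hm15 : |x02*x13*x20*x31| ≤ 2*(1/10^12:ℝ)*2*2 := abs_mul_le4 hb02 he13 hb20 hb31
  obtain ⟨hm15l, hm15r⟩ := abs_le.mp hm15
  have hm16 : |x02*x13*x21*x30| ≤ 2*(1/10^12:ℝ)*2*2 := abs_mul_le4 hb02 he13 hb21 hb30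
  obtain ⟨hm16l, hm16r⟩ := abs_le.mp hm16
  have hm17 : |x03*x10*x21*x32| ≤ (1/10^12:ℝ)*2*2*2 := abs_mul_le4 he03 hb10 hb21 hb32
  obtain ⟨hm17l, hm17r⟩ := abs_le.mp hm17
  have hm18 : |x03*x10*x22*x31| ≤ (1/10^12:ℝ)*2*2*2 := abs_mul_le4 he03 hb10 hb22 hb31
  obtain ⟨hm18l, hm18r⟩ := abs_le.mp hm18
  have hm19 : |x03*x11*x20*x32| ≤ (1/10^12:ℝ)*2*2*2 := abs_mul_le4 he03 hb11 hb20 hb32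
  obtain ⟨hm19l, hm19r⟩ := abs_le.mp hm19
  have hm20 : |x03*x11*x22*x30| ≤ (1/10^12:ℝ)*2*2*2 := abs_mul_le4 he03 hb11 hb22 hb30
  obtain ⟨hm20l, hm20r⟩ := abs_le.mp hm20
  have hm21 : |x03*x12*x20*x31| ≤ (1/10^12:ℝ)*2*2*2 := abs_mul_le4 he03 hb12 hb20 hb31
  obtain ⟨hm21l, hm21r⟩ := abs_le.mp hm21
  have hm22 : |x03*x12*x21*x30| ≤ (1/10^12:ℝ)*2*2*2 := abs_mul_le4 he03 hb12 hb21 hb30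
  obtain ⟨hm22l, hm22r⟩ := abs_le.mp hm22
  have h2 := mul_near1 hn22 hn33
  have ha0110 : |x01*x10| ≤ 4 := le_trans (abs_mul_le2 hu01 hu10) (by norm_num)
  have h5 : |x01*x10*x22*x33 - x01*x10| ≤ 12*(1/10^10:ℝ) := by
    have hx := abs_mul_le2 ha0110 h2
    rw [show (x01*x10)*(x22*x33 - 1) = x01*x10*x22*x33 - x01*x10 by ring] at hx
    linarith only [hx]
  obtain ⟨h5l, h5r⟩ := abs_le.mp h5
  rw [abs_le]; constructor <;> linarith only [hdet, h5l, h5r, hm0l, hm1l, hm2l, hm3l, hm4l, hm5l, hm6l, hm7l, hm8l, hm9l, hm10l, hm11l, hm12l, hm13l, hm14l, hm15l, hm16l, hm17l, hm18l, hm19l, hm20l, hm21l, hm22l, hm0r, hm1r, hm2r, hm3r, hm4r, hm5r, hm6r, hm7r, hm8r, hm9r, hm10r, hm11r, hm12r, hm13r, hm14r, hm15r, hm16r, hm17r, hm18r, hm19r, hm20r, hm21r, hm22r]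

-- asymmetric core: d1 is the max
lemma vertex3aux (d1 d2 d3 P12 P13 P23 : ℝ)
    (h21 : d2 ≤ d1) (h31 : d3 ≤ d1)
    (hd1 : 0 ≤ d1) (hd2 : 0 ≤ d2) (hd3 : 0 ≤ d3)
    (hP12lo : 1 - 3*(1/10^12:ℝ) ≤ P12) (hP12hi : P12 ≤ 1 + 3*(1/10^12:ℝ))
    (hP13lo : 1 - 3*(1/10^12:ℝ) ≤ P13) (hP13hi : P13 ≤ 1 + 3*(1/10^12:ℝ))
    (hP23lo : 1 - 3*(1/10^12:ℝ) ≤ P23) (hP23hi : P23 ≤ 1 + 3*(1/10^12:ℝ))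
    (hlo12 : P12 ≤ d1*d2) (hlo13 : P13 ≤ d1*d3) (hlo23 : P23 ≤ d2*d3)
    (hup12 : d1*d2 ≤ P12 + (1/10^12:ℝ)*(d1+d2+2))
    (hup13 : d1*d3 ≤ P13 + (1/10^12:ℝ)*(d1+d3+2)) :
    |d1 - 1| ≤ (1/10^10:ℝ) ∧ |d2 - 1| ≤ (1/10^10:ℝ) ∧ |d3 - 1| ≤ (1/10^10:ℝ) := by
  -- d1 ≥ 1 - 3(1/10^12:ℝ)  (since d1*d1 ≥ d2*d3·no... d1*d1 ≥ d1*d2 ≥ P12)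
  have hd1sq : 1 - 3*(1/10^12:ℝ) ≤ d1*d1 := by nlinarith [hlo12, hP12lo, mul_le_mul_of_nonneg_left h21 hd1]
  have hd1lo : 1 - 3*(1/10^12:ℝ) ≤ d1 := by nlinarith [hd1sq, hd1]
  -- upper bound on d1
  have hA : d1*d2 ≤ 1 + 5*(1/10^12:ℝ) + 2*(1/10^12:ℝ)*d1 := by
    have : (1/10^12:ℝ)*(d1+d2+2) ≤ (1/10^12:ℝ)*(2*d1+2) := by nlinarith [h21]
    nlinarith [hup12, hP12hi]
  have hB : d1*d3 ≤ 1 + 5*(1/10^12:ℝ) + 2*(1/10^12:ℝ)*d1 := by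
    have : (1/10^12:ℝ)*(d1+d3+2) ≤ (1/10^12:ℝ)*(2*d1+2) := by nlinarith [h31]
    nlinarith [hup13, hP13hi]
  have hRnn : (0:ℝ) ≤ 1 + 5*(1/10^12:ℝ) + 2*(1/10^12:ℝ)*d1 := by nlinarith [hd1]
  have hAB : (d1*d2)*(d1*d3) ≤ (1 + 5*(1/10^12:ℝ) + 2*(1/10^12:ℝ)*d1)*(1 + 5*(1/10^12:ℝ) + 2*(1/10^12:ℝ)*d1) :=
    mul_le_mul hA hB (mul_nonneg hd1 hd3) hRnn
  have hcd : (1 - 3*(1/10^12:ℝ))*(d1*d1) ≤ (d1*d2)*(d1*d3) := by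
    have h1 : (1-3*(1/10^12:ℝ)) ≤ d2*d3 := le_trans hP23lo hlo23
    nlinarith [mul_le_mul_of_nonneg_left h1 (mul_nonneg hd1 hd1)]
  have hd1hi : d1 ≤ 1 + 20*(1/10^12:ℝ) := by
    by_contra hcon
    push_neg at hcon
    nlinarith [hAB, hcd, hd1lo, hcon]
  -- lower bounds for d2 d3
  have hd2lo : 1 - 25*(1/10^12:ℝ) ≤ d2 := by
    have h1 : P12 ≤ (1+20*(1/10^12:ℝ))*d2 := le_trans hlo12 (mul_le_mul_of_nonneg_right hd1hi hd2)
    linarith [hP12lo]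
  have hd3lo : 1 - 25*(1/10^12:ℝ) ≤ d3 := by
    have h1 : P13 ≤ (1+20*(1/10^12:ℝ))*d3 := le_trans hlo13 (mul_le_mul_of_nonneg_right hd1hi hd3)
    linarith [hP13lo]
  refine ⟨?_, ?_, ?_⟩ <;> rw [abs_le] <;> constructor <;> norm_num <;> linarith

-- endgame
lemma endgame (t c bj bd ac ad : ℝ)
    (h1 : |t*t + c*c - 1| ≤ 1/100)
    (h2 : |bj*bj + bd*bd - 1| ≤ 1/100)
    (h3 : |ac*ac + ad*ad - 1| ≤ 1/100)
    (h4 : |t*bj| ≤ 1/10^8) (h5 : |c*ac| ≤ 1/10^8) (h6 : |ad*bd| ≤ 1/10^8) :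
    |t - 1| ≤ 1/20 ∨ |t + 1| ≤ 1/20 ∨ |t| ≤ 1/20 := by
  obtain ⟨h1l, h1r⟩ := abs_le.mp h1
  obtain ⟨h2l, h2r⟩ := abs_le.mp h2
  obtain ⟨h3l, h3r⟩ := abs_le.mp h3
  have h4s : (t*bj)*(t*bj) ≤ (1/10^8)*(1/10^8) := by
    have := mul_self_le_mul_self (abs_nonneg (t*bj)) h4
    rwa [abs_mul_abs_self] at this
  have h5s : (c*ac)*(c*ac) ≤ (1/10^8)*(1/10^8) := by
    have := mul_self_le_mul_self (abs_nonneg (c*ac)) h5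
    rwa [abs_mul_abs_self] at this
  have h6s : (ad*bd)*(ad*bd) ≤ (1/10^8)*(1/10^8) := by
    have := mul_self_le_mul_self (abs_nonneg (ad*bd)) h6
    rwa [abs_mul_abs_self] at this
  rcases le_or_gt (t*t) (1/500) with hsm | hbig1
  · right; right
    rw [abs_le]; constructor <;> nlinarith [hsm, sq_nonneg t]
  rcases le_or_gt (19/20) (t*t) with hbig | hmid
  · -- |t| close to 1
    rcases le_or_gt 0 t with hpos | hneg
    · left; rw [abs_le]; constructor <;> nlinarith [h1l, h1r, sq_nonneg c, hbig, hpos]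
    · right; left; rw [abs_le]; constructor <;> nlinarith [h1l, h1r, sq_nonneg c, hbig, hneg.le]
  · exfalso
    have hc2 : 1/25 ≤ c*c := by nlinarith [h1l, hmid]
    have hbj2 : bj*bj ≤ 1/10^13 := by nlinarith [h4s, hbig1, sq_nonneg bj, mul_le_mul_of_nonneg_right hbig1.le (sq_nonneg bj)]
    have hbd2 : 49/50 ≤ bd*bd := by nlinarith [h2l, hbj2]
    have had2 : ad*ad ≤ 1/10^15 := by nlinarith [h6s, hbd2, sq_nonneg ad, mul_le_mul_of_nonneg_right hbd2 (sq_nonneg ad)]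
    have hac2 : 49/50 ≤ ac*ac := by nlinarith [h3l, had2]
    nlinarith [h5s, mul_le_mul hc2 hac2 (by norm_num) (mul_self_nonneg c)]

section Abstract
variable {ι : Type*} (M : ι → ι → ℝ)

lemma near1E_two {x : ℝ} (h : |x - 1| ≤ (1/10^12:ℝ)) : |x| ≤ 2 := by
  obtain ⟨h1, h2⟩ := abs_le.mp h
  rw [abs_le]; constructor <;> norm_num at h1 h2 ⊢ <;> linarith

lemma prodE_lo {a b : ℝ} (ha : |a - 1| ≤ (1/10^12:ℝ)) (hb : |b - 1| ≤ (1/10^12:ℝ)) :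
    1 - 3*(1/10^12:ℝ) ≤ a*b := by
  obtain ⟨h1, h2⟩ := abs_le.mp ha
  obtain ⟨h3, h4⟩ := abs_le.mp hb
  nlinarith

lemma prodE_hi {a b : ℝ} (ha : |a - 1| ≤ (1/10^12:ℝ)) (hb : |b - 1| ≤ (1/10^12:ℝ)) :
    a*b ≤ 1 + 3*(1/10^12:ℝ) := by
  obtain ⟨h1, h2⟩ := abs_le.mp ha
  obtain ⟨h3, h4⟩ := abs_le.mp hb
  nlinarith


lemma vertexNorm
    (hsym : ∀ p q : ι, M p q = M q p)
    (hdetp : ∀ p0 p1 p2 p3 q0 q1 q2 q3 : ι, M p0 q0*M p1 q1*M p2 q2*M p3 q3 - M p0 q0*M p1 q1*M p2 q3*M p3 q2 - M p0 q0*M p1 q2*M p2 q1*M p3 q3 + M p0 q0*M p1 q2*M p2 q3*M p3 q1 + M p0 q0*M p1 q3*M p2 q1*M p3 q2 - M p0 q0*M p1 q3*M p2 q2*M p3 q1 - M p0 q1*M p1 q0*M p2 q2*M p3 q3 + M p0 q1*M p1 q0*M p2 q3*M p3 q2 + M p0 q1*M p1 q2*M p2 q0*M p3 q3 - M p0 q1*M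 p1 q2*M p2 q3*M p3 q0 - M p0 q1*M p1 q3*M p2 q0*M p3 q2 + M p0 q1*M p1 q3*M p2 q2*M p3 q0 + M p0 q2*M p1 q0*M p2 q1*M p3 q3 - M p0 q2*M p1 q0*M p2 q3*M p3 q1 - M p0 q2*M p1 q1*M p2 q0*M p3 q3 + M p0 q2*M p1 q1*M p2 q3*M p3 q0 + M p0 q2*M p1 q3*M p2 q0*M p3 q1 - M p0 q2*M p1 q3*M p2 q1*M p3 q0 - M p0 q3*M p1 q0*M p2 q1*M p3 q2 + M p0 q3*M p1 q0*M p2 q2*M p3 q1 + M p0 q3*M p1 q1*M p2 q0*M p3 q2 - M p0 q3*M p1 q1*M p2 q2*M p3 q0 - M p0 q3*M p1 q2*M p2 q0*M p3 q1 + M p0 q3*M p1 q2*M p2 q1*M p3 q0 = 0)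
    (hcs : ∀ p q : ι, M p q * M p q ≤ M p p * M q q)
    (hdiag : ∀ p : ι, 0 ≤ M p p)
    (v w u : Fin 3 → ι)
    (hv : ∀ μ ν : Fin 3, μ ≠ ν → |M (v μ) (v ν) - 1| ≤ (1/10^12:ℝ))
    (hw : ∀ μ ν : Fin 3, μ ≠ ν → |M (w μ) (w ν) - 1| ≤ (1/10^12:ℝ))
    (hu : ∀ μ ν : Fin 3, μ ≠ ν → |M (u μ) (u ν) - 1| ≤ (1/10^12:ℝ))
    (hvw : ∀ μ ν : Fin 3, |M (v μ) (w ν)| ≤ (1/10^12:ℝ))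
    (hvu : ∀ μ ν : Fin 3, |M (v μ) (u ν)| ≤ (1/10^12:ℝ))
    (hwu : ∀ μ ν : Fin 3, |M (w μ) (u ν)| ≤ (1/10^12:ℝ)) :
    ∀ κ : Fin 3, |M (v κ) (v κ) - 1| ≤ (1/10^10:ℝ) := by
  have good : ∀ z : Fin 3 → ι, (∀ μ ν : Fin 3, μ ≠ ν → |M (z μ) (z ν) - 1| ≤ (1/10^12:ℝ)) →
      ∃ κ, 1/2 ≤ M (z κ) (z κ) := by
    intro z hz
    by_cases h : 1/2 ≤ M (z 0) (z 0)
    · exact ⟨0, h⟩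
    · refine ⟨1, ?_⟩
      have h1 := hcs (z 0) (z 1)
      have h2 := hz 0 1 (by decide)
      obtain ⟨h2a, h2b⟩ := abs_le.mp h2
      have hd0 := hdiag (z 0)
      have hd1 := hdiag (z 1)
      push_neg at h
      nlinarith [h1, hd0, hd1, h, h2a, h2b]
  obtain ⟨kw, hkw⟩ := good w hw
  obtain ⟨ku, hku⟩ := good u hu
  have flip : ∀ p q : ι, |M p q| ≤ (1/10^12:ℝ) → |M q p| ≤ (1/10^12:ℝ) := by
    intro p q h; rw [hsym q p]; exact h
  have hloP : ∀ μ ν : Fin 3, M (v μ) (v ν) * M (v ν) (v μ) ≤ M (v μ) (v μ) * M (v ν) (v ν) := by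
    intro μ ν
    rw [hsym (v ν) (v μ)]
    exact hcs (v μ) (v ν)
  have hup : ∀ μ ν : Fin 3, μ ≠ ν → M (v μ) (v μ) * M (v ν) (v ν) ≤
      M (v μ) (v ν) * M (v ν) (v μ) + (1/10^12:ℝ)*(M (v μ) (v μ) + M (v ν) (v ν) + 2) := by
    intro μ ν hμν
    exact lemS1 (M (v μ) (v μ)) (M (v μ) (v ν)) (M (v μ) (w kw)) (M (v μ) (u ku))
      (M (v ν) (v μ)) (M (v ν) (v ν)) (M (v ν) (w kw)) (M (v ν) (u ku))
      (M (w kw) (v μ)) (M (w kw) (v ν)) (M (w kw) (w kw)) (M (w kw) (u ku))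
      (M (u ku) (v μ)) (M (u ku) (v ν)) (M (u ku) (w kw)) (M (u ku) (u ku))
      (hdiag _) (hdiag _) hkw hku
      (near1E_two (hv μ ν hμν)) (near1E_two (hv ν μ (Ne.symm hμν))) (hloP μ ν)
      (hvw μ kw) (hvu μ ku) (hvw ν kw) (hvu ν ku)
      (flip _ _ (hvw μ kw)) (flip _ _ (hvw ν kw)) (hwu kw ku)
      (flip _ _ (hvu μ ku)) (flip _ _ (hvu ν ku)) (flip _ _ (hwu kw ku))
      (hdetp (v μ) (v ν) (w kw) (u ku) (v μ) (v ν) (w kw) (u ku))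
  have hPlo : ∀ μ ν : Fin 3, μ ≠ ν → 1 - 3*(1/10^12:ℝ) ≤ M (v μ) (v ν) * M (v ν) (v μ) := by
    intro μ ν hμν; exact prodE_lo (hv μ ν hμν) (hv ν μ (Ne.symm hμν))
  have hPhi : ∀ μ ν : Fin 3, μ ≠ ν → M (v μ) (v ν) * M (v ν) (v μ) ≤ 1 + 3*(1/10^12:ℝ) := by
    intro μ ν hμν; exact prodE_hi (hv μ ν hμν) (hv ν μ (Ne.symm hμν))
  have main : |M (v 0) (v 0) - 1| ≤ (1/10^10:ℝ) ∧ |M (v 1) (v 1) - 1| ≤ (1/10^10:ℝ) ∧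
      |M (v 2) (v 2) - 1| ≤ (1/10^10:ℝ) := by
    have n01 : (0:Fin 3) ≠ 1 := by decide
    have n02 : (0:Fin 3) ≠ 2 := by decide
    have n12 : (1:Fin 3) ≠ 2 := by decide
    rcases le_total (M (v 1) (v 1)) (M (v 0) (v 0)) with a | a
    · rcases le_total (M (v 2) (v 2)) (M (v 0) (v 0)) with b | b
      · obtain ⟨x, y, z⟩ := vertex3aux (M (v 0) (v 0)) (M (v 1) (v 1)) (M (v 2) (v 2)) _ _ _
          a b (hdiag _) (hdiag _) (hdiag _)
          (hPlo 0 1 n01) (hPhi 0 1 n01) (hPlo 0 2 n02) (hPhi 0 2 n02) (hPlo 1 2 n12) (hPhi 1 2 n12)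
          (hloP 0 1) (hloP 0 2) (hloP 1 2) (hup 0 1 n01) (hup 0 2 n02)
        exact ⟨x, y, z⟩
      · obtain ⟨x, y, z⟩ := vertex3aux (M (v 2) (v 2)) (M (v 0) (v 0)) (M (v 1) (v 1)) _ _ _
          b (le_trans a b) (hdiag _) (hdiag _) (hdiag _)
          (hPlo 2 0 (Ne.symm n02)) (hPhi 2 0 (Ne.symm n02)) (hPlo 2 1 (Ne.symm n12))
          (hPhi 2 1 (Ne.symm n12)) (hPlo 0 1 n01) (hPhi 0 1 n01)
          (hloP 2 0) (hloP 2 1) (hloP 0 1) (hup 2 0 (Ne.symm n02)) (hup 2 1 (Ne.symm n12))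
        exact ⟨y, z, x⟩
    · rcases le_total (M (v 2) (v 2)) (M (v 1) (v 1)) with c | c
      · obtain ⟨x, y, z⟩ := vertex3aux (M (v 1) (v 1)) (M (v 0) (v 0)) (M (v 2) (v 2)) _ _ _
          a c (hdiag _) (hdiag _) (hdiag _)
          (hPlo 1 0 (Ne.symm n01)) (hPhi 1 0 (Ne.symm n01)) (hPlo 1 2 n12) (hPhi 1 2 n12)
          (hPlo 0 2 n02) (hPhi 0 2 n02)
          (hloP 1 0) (hloP 1 2) (hloP 0 2) (hup 1 0 (Ne.symm n01)) (hup 1 2 n12)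
        exact ⟨y, x, z⟩
      · obtain ⟨x, y, z⟩ := vertex3aux (M (v 2) (v 2)) (M (v 0) (v 0)) (M (v 1) (v 1)) _ _ _
          (le_trans a c) c (hdiag _) (hdiag _) (hdiag _)
          (hPlo 2 0 (Ne.symm n02)) (hPhi 2 0 (Ne.symm n02)) (hPlo 2 1 (Ne.symm n12))
          (hPhi 2 1 (Ne.symm n12)) (hPlo 0 1 n01) (hPhi 0 1 n01)
          (hloP 2 0) (hloP 2 1) (hloP 0 1) (hup 2 0 (Ne.symm n02)) (hup 2 1 (Ne.symm n12))
        exact ⟨y, z, x⟩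
  intro κ
  fin_cases κ
  · exact main.1
  · exact main.2.1
  · exact main.2.2


lemma gadget
    (hsym : ∀ p q : ι, M p q = M q p)
    (hdetp : ∀ p0 p1 p2 p3 q0 q1 q2 q3 : ι, M p0 q0*M p1 q1*M p2 q2*M p3 q3 - M p0 q0*M p1 q1*M p2 q3*M p3 q2 - M p0 q0*M p1 q2*M p2 q1*M p3 q3 + M p0 q0*M p1 q2*M p2 q3*M p3 q1 + M p0 q0*M p1 q3*M p2 q1*M p3 q2 - M p0 q0*M p1 q3*M p2 q2*M p3 q1 - M p0 q1*M p1 q0*M p2 q2*M p3 q3 + M p0 q1*M p1 q0*M p2 q3*M p3 q2 + M p0 q1*M p1 q2*M p2 q0*M p3 q3 - M p0 q1*M p1 q2*M p2 q3*M p3 q0 - M p0 q1*M p1 q3*M p2 q0*M p3 q2 + M p0 q1*M p1 q3*M p2 q2*M p3 q0 + M p0 q2*M p1 q0*M p2 q1*M p3 q3 - M p0 q2*M p1 q0*M p2 q3*M p3 q1 - M p0 q2*M p1 q1*M p2 q0*M p3 q3 + M p0 q2*M p1 q1*M p2 q3*M p3 q0 + M p0 q2*M p1 q3*M p2 q0*M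 p3 q1 - M p0 q2*M p1 q3*M p2 q1*M p3 q0 - M p0 q3*M p1 q0*M p2 q1*M p3 q2 + M p0 q3*M p1 q0*M p2 q2*M p3 q1 + M p0 q3*M p1 q1*M p2 q0*M p3 q2 - M p0 q3*M p1 q1*M p2 q2*M p3 q0 - M p0 q3*M p1 q2*M p2 q0*M p3 q1 + M p0 q3*M p1 q2*M p2 q1*M p3 q0 = 0)
    (hcs : ∀ p q : ι, M p q * M p q ≤ M p p * M q q)
    (hdiag : ∀ p : ι, 0 ≤ M p p)
    (vI vJ vA vB vC vD : Fin 3 → ι)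
    (hI : ∀ μ ν : Fin 3, μ ≠ ν → |M (vI μ) (vI ν) - 1| ≤ (1/10^12:ℝ))
    (hJ : ∀ μ ν : Fin 3, μ ≠ ν → |M (vJ μ) (vJ ν) - 1| ≤ (1/10^12:ℝ))
    (hA : ∀ μ ν : Fin 3, μ ≠ ν → |M (vA μ) (vA ν) - 1| ≤ (1/10^12:ℝ))
    (hB : ∀ μ ν : Fin 3, μ ≠ ν → |M (vB μ) (vB ν) - 1| ≤ (1/10^12:ℝ))
    (hC : ∀ μ ν : Fin 3, μ ≠ ν → |M (vC μ) (vC ν) - 1| ≤ (1/10^12:ℝ))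
    (hD : ∀ μ ν : Fin 3, μ ≠ ν → |M (vD μ) (vD ν) - 1| ≤ (1/10^12:ℝ))
    (hIA : ∀ μ ν : Fin 3, |M (vI μ) (vA ν)| ≤ (1/10^12:ℝ))
    (hIB : ∀ μ ν : Fin 3, |M (vI μ) (vB ν)| ≤ (1/10^12:ℝ))
    (hAB : ∀ μ ν : Fin 3, |M (vA μ) (vB ν)| ≤ (1/10^12:ℝ))
    (hJC : ∀ μ ν : Fin 3, |M (vJ μ) (vC ν)| ≤ (1/10^12:ℝ))
    (hJD : ∀ μ ν : Fin 3, |M (vJ μ) (vD ν)| ≤ (1/10^12:ℝ))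
    (hCD : ∀ μ ν : Fin 3, |M (vC μ) (vD ν)| ≤ (1/10^12:ℝ))
    (hAJ : ∀ μ ν : Fin 3, |M (vA μ) (vJ ν)| ≤ (1/10^12:ℝ))
    (hID : ∀ μ ν : Fin 3, |M (vI μ) (vD ν)| ≤ (1/10^12:ℝ))
    (hBC : ∀ μ ν : Fin 3, |M (vB μ) (vC ν)| ≤ (1/10^12:ℝ))
    (μ ν : Fin 3) :
    |M (vI μ) (vJ ν) - 1| ≤ 1/20 ∨ |M (vI μ) (vJ ν) + 1| ≤ 1/20 ∨ |M (vI μ) (vJ ν)| ≤ 1/20 := by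
  have flip : ∀ p q : ι, |M p q| ≤ (1/10^12:ℝ) → |M q p| ≤ (1/10^12:ℝ) := by
    intro p q h; rw [hsym q p]; exact h
  have nI := vertexNorm M hsym hdetp hcs hdiag vI vA vB hI hA hB hIA hIB hAB
  have nA := vertexNorm M hsym hdetp hcs hdiag vA vI vB hA hI hB
    (fun κ l => flip _ _ (hIA l κ)) hAB hIB
  have nB := vertexNorm M hsym hdetp hcs hdiag vB vI vA hB hI hA
    (fun κ l => flip _ _ (hIB l κ)) (fun κ l => flip _ _ (hAB l κ)) hIA
  have nJ := vertexNorm M hsym hdetp hcs hdiag vJ vC vD hJ hC hD hJC hJD hCD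
  have nC := vertexNorm M hsym hdetp hcs hdiag vC vJ vD hC hJ hD
    (fun κ l => flip _ _ (hJC l κ)) hCD hJD
  have nD := vertexNorm M hsym hdetp hcs hdiag vD vJ vC hD hJ hC
    (fun κ l => flip _ _ (hJD l κ)) (fun κ l => flip _ _ (hCD l κ)) hJC
  have ent2 : ∀ p q : ι, |M p p - 1| ≤ (1/10^10:ℝ) → |M q q - 1| ≤ (1/10^10:ℝ) → |M p q| ≤ 2 := by
    intro p q hp hq
    have h := hcs p q
    obtain ⟨hp1, hp2⟩ := abs_le.mp hp
    obtain ⟨hq1, hq2⟩ := abs_le.mp hq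
    rw [abs_le]
    constructor <;> nlinarith [h]
  have hA1 := lemA (M (vI μ) (vI μ)) (M (vI μ) (vJ ν)) (M (vI μ) (vC 0)) (M (vI μ) (vD 0))
    (M (vJ ν) (vI μ)) (M (vJ ν) (vJ ν)) (M (vJ ν) (vC 0)) (M (vJ ν) (vD 0))
    (M (vC 0) (vI μ)) (M (vC 0) (vJ ν)) (M (vC 0) (vC 0)) (M (vC 0) (vD 0))
    (M (vD 0) (vI μ)) (M (vD 0) (vJ ν)) (M (vD 0) (vC 0)) (M (vD 0) (vD 0))
    (nI μ) (nJ ν) (nC 0) (nD 0)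
    (ent2 _ _ (nI μ) (nJ ν)) (ent2 _ _ (nI μ) (nC 0)) (ent2 _ _ (nJ ν) (nI μ)) (ent2 _ _ (nC 0) (nI μ))
    (hID μ 0) (hJC ν 0) (hJD ν 0) (flip _ _ (hJC ν 0)) (hCD 0 0) (flip _ _ (hID μ 0))
    (flip _ _ (hJD ν 0)) (flip _ _ (hCD 0 0))
    (hdetp (vI μ) (vJ ν) (vC 0) (vD 0) (vI μ) (vJ ν) (vC 0) (vD 0))
  have hA2 := lemA (M (vB 0) (vB 0)) (M (vB 0) (vJ ν)) (M (vB 0) (vD 0)) (M (vB 0) (vC 0))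
    (M (vJ ν) (vB 0)) (M (vJ ν) (vJ ν)) (M (vJ ν) (vD 0)) (M (vJ ν) (vC 0))
    (M (vD 0) (vB 0)) (M (vD 0) (vJ ν)) (M (vD 0) (vD 0)) (M (vD 0) (vC 0))
    (M (vC 0) (vB 0)) (M (vC 0) (vJ ν)) (M (vC 0) (vD 0)) (M (vC 0) (vC 0))
    (nB 0) (nJ ν) (nD 0) (nC 0)
    (ent2 _ _ (nB 0) (nJ ν)) (ent2 _ _ (nB 0) (nD 0)) (ent2 _ _ (nJ ν) (nB 0)) (ent2 _ _ (nD 0) (nB 0))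
    (hBC 0 0) (hJD ν 0) (hJC ν 0) (flip _ _ (hJD ν 0)) (flip _ _ (hCD 0 0)) (flip _ _ (hBC 0 0))
    (flip _ _ (hJC ν 0)) (hCD 0 0)
    (hdetp (vB 0) (vJ ν) (vD 0) (vC 0) (vB 0) (vJ ν) (vD 0) (vC 0))
  have hA3 := lemA (M (vA 0) (vA 0)) (M (vA 0) (vC 0)) (M (vA 0) (vD 0)) (M (vA 0) (vJ ν))
    (M (vC 0) (vA 0)) (M (vC 0) (vC 0)) (M (vC 0) (vD 0)) (M (vC 0) (vJ ν))
    (M (vD 0) (vA 0)) (M (vD 0) (vC 0)) (M (vD 0) (vD 0)) (M (vD 0) (vJ ν))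
    (M (vJ ν) (vA 0)) (M (vJ ν) (vC 0)) (M (vJ ν) (vD 0)) (M (vJ ν) (vJ ν))
    (nA 0) (nC 0) (nD 0) (nJ ν)
    (ent2 _ _ (nA 0) (nC 0)) (ent2 _ _ (nA 0) (nD 0)) (ent2 _ _ (nC 0) (nA 0)) (ent2 _ _ (nD 0) (nA 0))
    (hAJ 0 ν) (hCD 0 0) (flip _ _ (hJC ν 0)) (flip _ _ (hCD 0 0)) (flip _ _ (hJD ν 0))
    (flip _ _ (hAJ 0 ν)) (hJC ν 0) (hJD ν 0)
    (hdetp (vA 0) (vC 0) (vD 0) (vJ ν) (vA 0) (vC 0) (vD 0) (vJ ν))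
  have hB1 := lemB (M (vI μ) (vB 0)) (M (vI μ) (vJ ν)) (M (vI μ) (vC 0)) (M (vI μ) (vD 0))
    (M (vJ ν) (vB 0)) (M (vJ ν) (vJ ν)) (M (vJ ν) (vC 0)) (M (vJ ν) (vD 0))
    (M (vC 0) (vB 0)) (M (vC 0) (vJ ν)) (M (vC 0) (vC 0)) (M (vC 0) (vD 0))
    (M (vD 0) (vB 0)) (M (vD 0) (vJ ν)) (M (vD 0) (vC 0)) (M (vD 0) (vD 0))
    (nJ ν) (nC 0) (nD 0)
    (ent2 _ _ (nI μ) (nJ ν)) (ent2 _ _ (nI μ) (nC 0)) (ent2 _ _ (nJ ν) (nB 0)) (ent2 _ _ (nD 0) (nB 0))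
    (hIB μ 0) (hID μ 0) (hJC ν 0) (hJD ν 0) (flip _ _ (hBC 0 0)) (flip _ _ (hJC ν 0)) (hCD 0 0)
    (flip _ _ (hJD ν 0)) (flip _ _ (hCD 0 0))
    (hdetp (vI μ) (vJ ν) (vC 0) (vD 0) (vB 0) (vJ ν) (vC 0) (vD 0))
  have hB2 := lemB (M (vI μ) (vA 0)) (M (vI μ) (vC 0)) (M (vI μ) (vJ ν)) (M (vI μ) (vD 0))
    (M (vC 0) (vA 0)) (M (vC 0) (vC 0)) (M (vC 0) (vJ ν)) (M (vC 0) (vD 0))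
    (M (vJ ν) (vA 0)) (M (vJ ν) (vC 0)) (M (vJ ν) (vJ ν)) (M (vJ ν) (vD 0))
    (M (vD 0) (vA 0)) (M (vD 0) (vC 0)) (M (vD 0) (vJ ν)) (M (vD 0) (vD 0))
    (nC 0) (nJ ν) (nD 0)
    (ent2 _ _ (nI μ) (nC 0)) (ent2 _ _ (nI μ) (nJ ν)) (ent2 _ _ (nC 0) (nA 0)) (ent2 _ _ (nD 0) (nA 0))
    (hIA μ 0) (hID μ 0) (flip _ _ (hJC ν 0)) (hCD 0 0) (flip _ _ (hAJ 0 ν)) (hJC ν 0) (hJD ν 0)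
    (flip _ _ (hCD 0 0)) (flip _ _ (hJD ν 0))
    (hdetp (vI μ) (vC 0) (vJ ν) (vD 0) (vA 0) (vC 0) (vJ ν) (vD 0))
  have hB3 := lemB (M (vA 0) (vB 0)) (M (vA 0) (vD 0)) (M (vA 0) (vC 0)) (M (vA 0) (vJ ν))
    (M (vD 0) (vB 0)) (M (vD 0) (vD 0)) (M (vD 0) (vC 0)) (M (vD 0) (vJ ν))
    (M (vC 0) (vB 0)) (M (vC 0) (vD 0)) (M (vC 0) (vC 0)) (M (vC 0) (vJ ν))
    (M (vJ ν) (vB 0)) (M (vJ ν) (vD 0)) (M (vJ ν) (vC 0)) (M (vJ ν) (vJ ν))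
    (nD 0) (nC 0) (nJ ν)
    (ent2 _ _ (nA 0) (nD 0)) (ent2 _ _ (nA 0) (nC 0)) (ent2 _ _ (nD 0) (nB 0)) (ent2 _ _ (nJ ν) (nB 0))
    (hAB 0 0) (hAJ 0 ν) (flip _ _ (hCD 0 0)) (flip _ _ (hJD ν 0)) (flip _ _ (hBC 0 0)) (hCD 0 0)
    (flip _ _ (hJC ν 0)) (hJD ν 0) (hJC ν 0)
    (hdetp (vA 0) (vD 0) (vC 0) (vJ ν) (vB 0) (vD 0) (vC 0) (vJ ν))
  rw [hsym (vJ ν) (vI μ), hsym (vC 0) (vI μ)] at hA1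
  rw [hsym (vJ ν) (vB 0), hsym (vD 0) (vB 0)] at hA2
  rw [hsym (vC 0) (vA 0), hsym (vD 0) (vA 0)] at hA3
  rw [hsym (vJ ν) (vB 0)] at hB1
  rw [hsym (vC 0) (vA 0)] at hB2
  rw [hsym (vD 0) (vB 0)] at hB3
  exact endgame (M (vI μ) (vJ ν)) (M (vI μ) (vC 0)) (M (vB 0) (vJ ν)) (M (vB 0) (vD 0))
    (M (vA 0) (vC 0)) (M (vA 0) (vD 0)) hA1 hA2 hA3 hB1 hB2 hB3

end Abstract

/-- With `ε₀ := 10⁻¹²`: under the hypotheses of the `(P3)`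
construction with a fitting `L` and a small perturbation `H`, for distinct original
vertices `i, j` of `G` and `μ, ν ∈ {1,2,3}`, the entry
`t := (A + L + H)((i,μ),(j,ν))` satisfies: (a) one of `|t − 1| ≤ 1/20`,
`|t + 1| ≤ 1/20`, `|t| ≤ 1/20`; (b) if `{i,j} ∈ E(G)` then `|t| ≤ 1/20`. -/
theorem stmt10 (N : ℕ) (G : SimpleGraph (Fin N)) (L H : Matrix (Idx N) (Idx N) ℝ)
    (hL : L.IsSymm) (hH : H.IsSymm) (hfit : FitsX N G L)
    (hHnorm : frob H ≤ (1 / 10 ^ 12 : ℝ))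
    (hpsd : (AP3 N + L + H).PosSemidef) (hrank : (AP3 N + L + H).rank ≤ 3)
    (i j : Fin N) (hij : i ≠ j) (μ ν : Fin 3) :
    (|(AP3 N + L + H) (Sum.inl i, μ) (Sum.inl j, ν) - 1| ≤ 1 / 20 ∨
      |(AP3 N + L + H) (Sum.inl i, μ) (Sum.inl j, ν) + 1| ≤ 1 / 20 ∨
      |(AP3 N + L + H) (Sum.inl i, μ) (Sum.inl j, ν)| ≤ 1 / 20) ∧
    (G.Adj i j → |(AP3 N + L + H) (Sum.inl i, μ) (Sum.inl j, ν)| ≤ 1 / 20) := by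
  classical
  set S : Matrix (Idx N) (Idx N) ℝ := AP3 N + L + H with hS
  have hsym : ∀ p q : Idx N, S p q = S q p := by
    intro p q
    have h := hpsd.1.apply q p
    rw [star_trivial] at h
    exact h
  have hdiag : ∀ p : Idx N, 0 ≤ S p p := psd_diag hpsd
  have hcs : ∀ p q : Idx N, S p q * S p q ≤ S p p * S q q := psd_cs hpsd hsym
  have hHabs : ∀ p q : Idx N, |H p q| ≤ (1/10^12:ℝ) := by
    intro p q
    have hsq : (H p q)^2 ≤ ∑ a, ∑ b, (H a b)^2 := by
      calc (H p q)^2 ≤ ∑ b, (H p b)^2 :=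
            Finset.single_le_sum (fun b _ => sq_nonneg (H p b)) (Finset.mem_univ q)
        _ ≤ ∑ a, ∑ b, (H a b)^2 :=
            Finset.single_le_sum (fun a _ => Finset.sum_nonneg fun b _ => sq_nonneg (H a b))
              (Finset.mem_univ p)
    have h1 : |H p q| = Real.sqrt ((H p q)^2) := (Real.sqrt_sq_eq_abs _).symm
    rw [h1]
    calc Real.sqrt ((H p q)^2) ≤ Real.sqrt (∑ a, ∑ b, (H a b)^2) := Real.sqrt_le_sqrt hsq
      _ ≤ (1/10^12:ℝ) := by
          have := hHnorm
          rw [frob] at this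
          convert this using 2 <;> norm_num
  have hwv : ∀ (v : PV N) (κ l : Fin 3), κ ≠ l → |S (v, κ) (v, l) - 1| ≤ (1/10^12:ℝ) := by
    intro v κ l hkl
    have hAv : AP3 N (v, κ) (v, l) = 1 := by
      rw [AP3]; simp [hkl]
    have hLv : L (v, κ) (v, l) = 0 := hfit.2 v κ l hkl
    have : S (v, κ) (v, l) = 1 + H (v, κ) (v, l) := by
      rw [hS]
      simp [Matrix.add_apply, hAv, hLv]
    rw [this]
    simpa using hHabs (v, κ) (v, l)
  have hedge : ∀ p q : Idx N, (peetersGraph N G).Adj p.1 q.1 → |S p q| ≤ (1/10^12:ℝ) := by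
    intro p q hadj
    have hne : p.1 ≠ q.1 := hadj.ne
    have hAv : AP3 N p q = 0 := by
      rw [AP3]; simp [hne]
    have hLv : L p q = 0 := hfit.1 p q hadj
    have : S p q = H p q := by
      rw [hS]
      simp [Matrix.add_apply, hAv, hLv]
    rw [this]
    exact hHabs p q
  have hdetp : ∀ p0 p1 p2 p3 q0 q1 q2 q3 : Idx N,
      S p0 q0*S p1 q1*S p2 q2*S p3 q3 - S p0 q0*S p1 q1*S p2 q3*S p3 q2 - S p0 q0*S p1 q2*S p2 q1*S p3 q3 + S p0 q0*S p1 q2*S p2 q3*S p3 q1 + S p0 q0*S p1 q3*S p2 q1*S p3 q2 - S p0 q0*S p1 q3*S p2 q2*S p3 q1 - S p0 q1*S p1 q0*S p2 q2*S p3 q3 + S p0 q1*S p1 q0*S p2 q3*S p3 q2 + S p0 q1*S p1 q2*S p2 q0*S p3 q3 - S p0 q1*S p1 q2*S p2 q3*S p3 q0 - S p0 q1*S p1 q3*S p2 q0*S p3 q2 + S p0 q1*S p1 q3*S p2 q2*S p3 q0 + S p0 q2*S p1 q0*S p2 q1*S p3 q3 - S p0 q2*S p1 q0*S p2 q3*S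 p3 q1 - S p0 q2*S p1 q1*S p2 q0*S p3 q3 + S p0 q2*S p1 q1*S p2 q3*S p3 q0 + S p0 q2*S p1 q3*S p2 q0*S p3 q1 - S p0 q2*S p1 q3*S p2 q1*S p3 q0 - S p0 q3*S p1 q0*S p2 q1*S p3 q2 + S p0 q3*S p1 q0*S p2 q2*S p3 q1 + S p0 q3*S p1 q1*S p2 q0*S p3 q2 - S p0 q3*S p1 q1*S p2 q2*S p3 q0 - S p0 q3*S p1 q2*S p2 q0*S p3 q1 + S p0 q3*S p1 q2*S p2 q1*S p3 q0 = 0 := by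
    intro p0 p1 p2 p3 q0 q1 q2 q3
    have hz := det4_zero S hrank ![p0,p1,p2,p3] ![q0,q1,q2,q3]
    rw [det_fin_four] at hz
    simpa [Matrix.submatrix_apply] using hz
  have adjE : ∀ x y : PV N, peetersRel N G x y → x ≠ y → (peetersGraph N G).Adj x y := by
    intro x y hrel hne
    rw [peetersGraph, SimpleGraph.fromRel_adj]
    exact ⟨hne, Or.inl hrel⟩
  constructor
  · -- part (a)
    rcases lt_or_gt_of_ne hij with hlt | hgt
    · -- i < j
      set q : Pairs N := ⟨(i, j), hlt⟩ with hq
      have eIA : (peetersGraph N G).Adj (Sum.inl i) (Sum.inr (q, 0)) :=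
        adjE _ _ (Or.inr ⟨q, Or.inl ⟨rfl, rfl⟩⟩) (by simp)
      have eIB : (peetersGraph N G).Adj (Sum.inl i) (Sum.inr (q, 1)) :=
        adjE _ _ (Or.inr ⟨q, Or.inr (Or.inl ⟨rfl, rfl⟩)⟩) (by simp)
      have eAB : (peetersGraph N G).Adj (Sum.inr (q, 0) : PV N) (Sum.inr (q, 1)) :=
        adjE _ _ (Or.inr ⟨q, Or.inr (Or.inr (Or.inl ⟨rfl, rfl⟩))⟩) (by simp)
      have eJC : (peetersGraph N G).Adj (Sum.inl j) (Sum.inr (q, 2)) :=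
        adjE _ _ (Or.inr ⟨q, Or.inr (Or.inr (Or.inr (Or.inl ⟨rfl, rfl⟩)))⟩) (by simp)
      have eJD : (peetersGraph N G).Adj (Sum.inl j) (Sum.inr (q, 3)) :=
        adjE _ _ (Or.inr ⟨q, Or.inr (Or.inr (Or.inr (Or.inr (Or.inl ⟨rfl, rfl⟩))))⟩) (by simp)
      have eCD : (peetersGraph N G).Adj (Sum.inr (q, 2) : PV N) (Sum.inr (q, 3)) :=
        adjE _ _ (Or.inr ⟨q, Or.inr (Or.inr (Or.inr (Or.inr (Or.inr (Or.inl ⟨rfl, rfl⟩)))))⟩)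
          (by simp)
      have eAJ : (peetersGraph N G).Adj (Sum.inr (q, 0) : PV N) (Sum.inl j) :=
        adjE _ _ (Or.inr ⟨q, Or.inr (Or.inr (Or.inr (Or.inr (Or.inr (Or.inr (Or.inl ⟨rfl, rfl⟩))))))⟩)
          (by simp)
      have eID : (peetersGraph N G).Adj (Sum.inl i) (Sum.inr (q, 3)) :=
        adjE _ _ (Or.inr ⟨q, Or.inr (Or.inr (Or.inr (Or.inr (Or.inr (Or.inr (Or.inr (Or.inl ⟨rfl, rfl⟩)))))))⟩)
          (by simp)
      have eBC : (peetersGraph N G).Adj (Sum.inr (q, 1) : PV N) (Sum.inr (q, 2)) :=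
        adjE _ _ (Or.inr ⟨q, Or.inr (Or.inr (Or.inr (Or.inr (Or.inr (Or.inr (Or.inr (Or.inr ⟨rfl, rfl⟩)))))))⟩)
          (by simp)
      exact gadget (fun p q => S p q) hsym hdetp hcs hdiag
        (fun κ => (Sum.inl i, κ)) (fun κ => (Sum.inl j, κ))
        (fun κ => (Sum.inr (q, 0), κ)) (fun κ => (Sum.inr (q, 1), κ))
        (fun κ => (Sum.inr (q, 2), κ)) (fun κ => (Sum.inr (q, 3), κ))
        (fun κ l h => hwv _ κ l h) (fun κ l h => hwv _ κ l h) (fun κ l h => hwv _ κ l h)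
        (fun κ l h => hwv _ κ l h) (fun κ l h => hwv _ κ l h) (fun κ l h => hwv _ κ l h)
        (fun κ l => hedge _ _ eIA) (fun κ l => hedge _ _ eIB) (fun κ l => hedge _ _ eAB)
        (fun κ l => hedge _ _ eJC) (fun κ l => hedge _ _ eJD) (fun κ l => hedge _ _ eCD)
        (fun κ l => hedge _ _ eAJ) (fun κ l => hedge _ _ eID) (fun κ l => hedge _ _ eBC)
        μ ν
    · -- j < i
      set q : Pairs N := ⟨(j, i), hgt⟩ with hq
      have eIA : (peetersGraph N G).Adj (Sum.inl j) (Sum.inr (q, 0)) :=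
        adjE _ _ (Or.inr ⟨q, Or.inl ⟨rfl, rfl⟩⟩) (by simp)
      have eIB : (peetersGraph N G).Adj (Sum.inl j) (Sum.inr (q, 1)) :=
        adjE _ _ (Or.inr ⟨q, Or.inr (Or.inl ⟨rfl, rfl⟩)⟩) (by simp)
      have eAB : (peetersGraph N G).Adj (Sum.inr (q, 0) : PV N) (Sum.inr (q, 1)) :=
        adjE _ _ (Or.inr ⟨q, Or.inr (Or.inr (Or.inl ⟨rfl, rfl⟩))⟩) (by simp)
      have eJC : (peetersGraph N G).Adj (Sum.inl i) (Sum.inr (q, 2)) :=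
        adjE _ _ (Or.inr ⟨q, Or.inr (Or.inr (Or.inr (Or.inl ⟨rfl, rfl⟩)))⟩) (by simp)
      have eJD : (peetersGraph N G).Adj (Sum.inl i) (Sum.inr (q, 3)) :=
        adjE _ _ (Or.inr ⟨q, Or.inr (Or.inr (Or.inr (Or.inr (Or.inl ⟨rfl, rfl⟩))))⟩) (by simp)
      have eCD : (peetersGraph N G).Adj (Sum.inr (q, 2) : PV N) (Sum.inr (q, 3)) :=
        adjE _ _ (Or.inr ⟨q, Or.inr (Or.inr (Or.inr (Or.inr (Or.inr (Or.inl ⟨rfl, rfl⟩)))))⟩)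
          (by simp)
      have eAJ : (peetersGraph N G).Adj (Sum.inr (q, 0) : PV N) (Sum.inl i) :=
        adjE _ _ (Or.inr ⟨q, Or.inr (Or.inr (Or.inr (Or.inr (Or.inr (Or.inr (Or.inl ⟨rfl, rfl⟩))))))⟩)
          (by simp)
      have eID : (peetersGraph N G).Adj (Sum.inl j) (Sum.inr (q, 3)) :=
        adjE _ _ (Or.inr ⟨q, Or.inr (Or.inr (Or.inr (Or.inr (Or.inr (Or.inr (Or.inr (Or.inl ⟨rfl, rfl⟩)))))))⟩)
          (by simp)
      have eBC : (peetersGraph N G).Adj (Sum.inr (q, 1) : PV N) (Sum.inr (q, 2)) :=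
        adjE _ _ (Or.inr ⟨q, Or.inr (Or.inr (Or.inr (Or.inr (Or.inr (Or.inr (Or.inr (Or.inr ⟨rfl, rfl⟩)))))))⟩)
          (by simp)
      have hRes := gadget (fun p q => S p q) hsym hdetp hcs hdiag
        (fun κ => (Sum.inl j, κ)) (fun κ => (Sum.inl i, κ))
        (fun κ => (Sum.inr (q, 0), κ)) (fun κ => (Sum.inr (q, 1), κ))
        (fun κ => (Sum.inr (q, 2), κ)) (fun κ => (Sum.inr (q, 3), κ))
        (fun κ l h => hwv _ κ l h) (fun κ l h => hwv _ κ l h) (fun κ l h => hwv _ κ l h)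
        (fun κ l h => hwv _ κ l h) (fun κ l h => hwv _ κ l h) (fun κ l h => hwv _ κ l h)
        (fun κ l => hedge _ _ eIA) (fun κ l => hedge _ _ eIB) (fun κ l => hedge _ _ eAB)
        (fun κ l => hedge _ _ eJC) (fun κ l => hedge _ _ eJD) (fun κ l => hedge _ _ eCD)
        (fun κ l => hedge _ _ eAJ) (fun κ l => hedge _ _ eID) (fun κ l => hedge _ _ eBC)
        ν μ
      have e : S (Sum.inl j, ν) (Sum.inl i, μ) = S (Sum.inl i, μ) (Sum.inl j, ν) := hsym _ _
      simpa [e] using hRes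
  · -- part (b)
    intro hAdj
    have hadj' : (peetersGraph N G).Adj (Sum.inl i) (Sum.inl j) :=
      adjE _ _ (Or.inl ⟨i, j, hAdj, rfl, rfl⟩) (by simp [hij])
    have := hedge (Sum.inl i, μ) (Sum.inl j, ν) hadj'
    calc |S (Sum.inl i, μ) (Sum.inl j, ν)| ≤ (1/10^12:ℝ) := this
      _ ≤ 1/20 := by norm_num


end
end
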